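/- arXiv:2410.06095 — 2 statements merged into one kernel-verified Lean document; each statement's English description precedes it below -/
import Mathlib

section
/- Let H be an n-vertex graph and c : V(H) → Ω an equitable colouring. Let c' be a random refinement of c, obtained by independently, for each vertex, assigning it a new colour unique to that vertex with probability at least 0.7 (and otherwise keeping its colour under c). Then with high probability (with probability at least 1 − o(1) as n → ∞, uniformly over all choices of H, c and the individual recolouring probabilities) the disparity graph D(H, R*c') has maximum degree at most 4·log n. -/
open MeasureTheory Filter

/-- Product of (independent) Bernoulli distributions on `ι → Bool`, with
success probability `q i` in coordinate `i`. -/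
noncomputable def bernoulliProduct (ι : Type*) [Fintype ι] [DecidableEq ι] (q : ι → ℝ) :
    Measure (ι → Bool) :=
  ∑ f : ι → Bool,
    (∏ i : ι, if f i then ENNReal.ofReal (q i) else ENNReal.ofReal (1 - q i)) •
      Measure.dirac f

/-- The Erdős–Rényi measure: each (potential) edge of the complete graph on `Fin n`
is present independently with probability `p`; encoded as a random `Sym2 (Fin n) → Bool`. -/
noncomputable def erdosRenyiMeasure (n : ℕ) (p : ℝ) : Measure (Sym2 (Fin n) → Bool) :=
  bernoulliProduct (Sym2 (Fin n)) fun _ => p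

/-- The graph on `Fin n` determined by an edge-indicator function. -/
def graphOfFlip {n : ℕ} (f : Sym2 (Fin n) → Bool) : SimpleGraph (Fin n) :=
  SimpleGraph.fromRel fun u v => f s(u, v) = true

/-- Symmetric difference of two graphs on the same vertex set. -/
def symmDiffG {V : Type*} (G₁ G₂ : SimpleGraph V) : SimpleGraph V :=
  SimpleGraph.fromRel fun u v => Xor' (G₁.Adj u v) (G₂.Adj u v)

/-- `crEquiv G c t u v` : vertices `u` and `v` get the same colour after `t` rounds of
colour refinement on `G`, starting from the colouring `c`. -/
def crEquiv {V : Type*} {Ω : Type*} (G : SimpleGraph V) (c : V → Ω) : ℕ → V → V → Prop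
  | 0, u, v => c u = c v
  | (t + 1), u, v => crEquiv G c t u v ∧ ∀ w : V,
      Nat.card {x : V // G.Adj u x ∧ crEquiv G c t x w} =
      Nat.card {x : V // G.Adj v x ∧ crEquiv G c t x w}

/-- `u` and `v` get the same colour in the stable colouring `R* c`. -/
def crStable {V : Type*} {Ω : Type*} (G : SimpleGraph V) (c : V → Ω) (u v : V) : Prop :=
  ∀ t, crEquiv G c t u v

/-- `u` and `v` get the same colour in the stable colouring `R* σ`
(colour refinement started from the trivial colouring). -/
def crStableTrivial {V : Type*} (G : SimpleGraph V) (u v : V) : Prop :=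
  crStable G (fun _ => (0 : ℕ)) u v

/-- Equality of the initial pair-colourings `φ_{G,c}` on two ordered pairs of vertices. -/
def wl2Init {V : Type*} {Ω : Type*} (G : SimpleGraph V) (c : V → Ω) (p q : V × V) : Prop :=
  (G.Adj p.1 p.2 ↔ G.Adj q.1 q.2) ∧ (p.1 = p.2 ↔ q.1 = q.2) ∧
    (p.1 = p.2 → q.1 = q.2 → c p.2 = c q.2)

/-- `wl2Equiv G c t p q` : the ordered pairs `p` and `q` get the same colour after `t` rounds of
the 2-dimensional Weisfeiler–Leman refinement on `G`, started from `φ_{G,c}`. -/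
def wl2Equiv {V : Type*} {Ω : Type*} (G : SimpleGraph V) (c : V → Ω) :
    ℕ → V × V → V × V → Prop
  | 0, p, q => wl2Init G c p q
  | (t + 1), p, q => wl2Equiv G c t p q ∧ ∀ r s : V × V,
      Nat.card {w : V // wl2Equiv G c t (p.1, w) r ∧ wl2Equiv G c t (w, p.2) s} =
      Nat.card {w : V // wl2Equiv G c t (q.1, w) r ∧ wl2Equiv G c t (w, q.2) s}

/-- `u` and `v` get the same colour in the vertex colouring `V* c` obtained from the stable
pair colouring of the 2-dimensional Weisfeiler–Leman algorithm started from `φ_{G,c}`. -/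
def wl2VertexEquiv {V : Type*} {Ω : Type*} (G : SimpleGraph V) (c : V → Ω) (u v : V) : Prop :=
  ∀ t, wl2Equiv G c t (u, u) (v, v)

/-- Given a colouring of `V(H)` encoded as the equivalence relation `r` ("has the same colour"),
`majority H r u v` says that at least half of the possible edges between the colour class of `u`
and the colour class of `v` are present in `H` (counting ordered pairs). -/
def majority {V : Type*} (H : SimpleGraph V) (r : V → V → Prop) (u v : V) : Prop :=
  Nat.card {p : V × V // p.1 ≠ p.2 ∧ r p.1 u ∧ r p.2 v} ≤
    2 * Nat.card {p : V × V // p.1 ≠ p.2 ∧ r p.1 u ∧ r p.2 v ∧ H.Adj p.1 p.2}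

/-- The disparity graph `D(H,c)`, for the colouring encoded by the relation `r`. -/
def disparity {V : Type*} (H : SimpleGraph V) (r : V → V → Prop) : SimpleGraph V :=
  SimpleGraph.fromRel fun u v => Xor' (H.Adj u v) (majority H r u v)

/-- The generalised disparity graph `D_L(H,c)` for a 0-1 matrix `L` on colours. -/
def gDisparity {V : Type*} {Ω : Type*} (H : SimpleGraph V) (c : V → Ω) (L : Ω → Ω → Bool) :
    SimpleGraph V :=
  SimpleGraph.fromRel fun u v => Xor' (H.Adj u v) (L (c u) (c v) = true)

/-- The vertex set of the connected component of `v` in `G`. -/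
def compSet {V : Type*} (G : SimpleGraph V) (v : V) : Set V := {u | G.Reachable v u}

/-- A colouring is equitable if any two vertices with the same colour have the same number of
neighbours in every colour class. -/
def IsEquitable {V : Type*} {Ω : Type*} (H : SimpleGraph V) (c : V → Ω) : Prop :=
  ∀ u v, c u = c v → ∀ a : Ω,
    Nat.card {x : V // H.Adj u x ∧ c x = a} = Nat.card {x : V // H.Adj v x ∧ c x = a}

/-- Vertex set of the `k`-core of `G`: the union of all vertex sets inducing minimum
degree at least `k`. -/
def kCore {V : Type*} (G : SimpleGraph V) (k : ℕ) : Set V :=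
  ⋃₀ {S : Set V | ∀ v ∈ S, k ≤ Nat.card {u : V // u ∈ S ∧ G.Adj v u}}

/-- `V_{2,3}(G)`: vertices of the 2-core of `G` having degree at least 3 in the 2-core. -/
def V23 {V : Type*} (G : SimpleGraph V) : Set V :=
  {v | v ∈ kCore G 2 ∧ 3 ≤ Nat.card {u : V // u ∈ kCore G 2 ∧ G.Adj v u}}

/-- The graph obtained from `G` by deleting all edges meeting `T`
(so that reachability in `avoidG G T` from `v ∉ T` is reachability in `G - T`). -/
def avoidG {V : Type*} (G : SimpleGraph V) (T : Set V) : SimpleGraph V :=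
  SimpleGraph.fromRel fun u v => G.Adj u v ∧ u ∉ T ∧ v ∉ T

/-- `V_{2,3}^{safe}(G)`: vertices `v ∈ V_{2,3}(G)` such that after deleting any set of at most
two other vertices, the component of `v` still contains at least 3 vertices of `V_{2,3}(G)`. -/
def V23safe {V : Type*} (G : SimpleGraph V) : Set V :=
  {v | v ∈ V23 G ∧ ∀ T : Finset V, T.card ≤ 2 → v ∉ T →
    3 ≤ Nat.card {w : V // w ∈ V23 G ∧ (avoidG G (T : Set V)).Reachable v w}}

open Classical in
/-- `Lmul G i u v w` is the multiplicity of the vertex `w` in the multiset `L^i_G(u,v)`. -/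
noncomputable def Lmul {V : Type*} [Fintype V] (G : SimpleGraph V) : ℕ → V → V → V → ℕ
  | 0, u, _, w => if w = u then 1 else 0
  | (i + 1), u, v, w =>
      (∑ x : V, if G.Adj w x then Lmul G i u v x else 0) -
        (∑ x : V, if G.Adj w x then Lmul G i v u x else 0)

/-- Union over `j < i` of the supports of `L^j_G(u,v)` and `L^j_G(v,u)`. -/
noncomputable def Sbelow {V : Type*} [Fintype V] (G : SimpleGraph V) (u v : V) (i : ℕ) :
    Set V :=
  {w | ∃ j < i, 0 < Lmul G j u v w ∨ 0 < Lmul G j v u w}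

/-- `S^{≤ i}_G({u,v})`. -/
noncomputable def Sle {V : Type*} [Fintype V] (G : SimpleGraph V) (u v : V) (i : ℕ) : Set V :=
  Sbelow G u v (i + 1)

/-- `S^{i}_G({u,v}) = S^{≤ i}_G({u,v}) \ S^{≤ i-1}_G({u,v})`. -/
noncomputable def Sat {V : Type*} [Fintype V] (G : SimpleGraph V) (u v : V) (i : ℕ) : Set V :=
  Sbelow G u v (i + 1) \ Sbelow G u v i

/-- Degree of a vertex (as `Nat.card` of the neighbour set, avoiding decidability issues). -/
noncomputable def ncDegree {V : Type*} (G : SimpleGraph V) (v : V) : ℕ :=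
  Nat.card {u : V // G.Adj v u}

/-- The random refinement of a colouring `c`: each vertex `v` with `f v = true` receives
a brand-new colour unique to itself. -/
def refineColor {V : Type*} {Ω : Type*} (c : V → Ω) (f : V → Bool) : V → Ω ⊕ V :=
  fun v => if f v then Sum.inr v else Sum.inl (c v)

/-- `D(H,c)` (for the colouring encoded by the relation `r`) is `s`-bounded: every
intersection of a colour class with a connected component of `D(H,c)` has at most
`s` elements. -/
def sBounded {V : Type*} (H : SimpleGraph V) (r : V → V → Prop) (s : ℕ) : Prop :=
  ∀ u v : V, Nat.card {w : V // r w u ∧ w ∈ compSet (disparity H r) v} ≤ s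

/-- The type of canonical colours after `t` rounds of colour refinement. -/
def CCol : ℕ → Type
  | 0 => Unit
  | (t + 1) => CCol t × Multiset (CCol t)

open Classical in
/-- The canonical colour of a vertex after `t` rounds of colour refinement. -/
noncomputable def canonColor {V : Type*} [Fintype V] (G : SimpleGraph V) :
    (t : ℕ) → V → CCol t
  | 0, _ => ()
  | (t + 1), v =>
      (canonColor G t v, (Finset.univ.filter fun w => G.Adj v w).val.map (canonColor G t))

/-- The modal probability `M(m,p)` of a `Binomial(m,p)` random variable. -/
noncomputable def modalProb (m : ℕ) (p : ℝ) : ℝ :=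
  (m.choose ⌊(m + 1 : ℝ) * p⌋₊ : ℝ) * p ^ ⌊(m + 1 : ℝ) * p⌋₊ *
    (1 - p) ^ (m - ⌊(m + 1 : ℝ) * p⌋₊)


section AuxHelpers

open Finset

lemma ncard_filter {V : Type*} [Fintype V] (p : V → Prop) [DecidablePred p] :
    Nat.card {x : V // p x} = (Finset.univ.filter p).card := by
  rw [Nat.card_eq_fintype_card, Fintype.card_subtype]

lemma point_count {V : Type*} [Fintype V] (P : V → Prop) (x : V) [Decidable (P x)] :
    Nat.card {y : V // P y ∧ y = x} = if P x then 1 else 0 := by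
  classical
  rw [ncard_filter]
  by_cases h : P x
  · rw [if_pos h]
    have he : Finset.univ.filter (fun y : V => P y ∧ y = x) = {x} := by
      ext y
      simp only [Finset.mem_filter, Finset.mem_univ, true_and, Finset.mem_singleton]
      exact ⟨fun hy => hy.2, by rintro rfl; exact ⟨h, rfl⟩⟩
    rw [he, Finset.card_singleton]
  · rw [if_neg h]
    have he : Finset.univ.filter (fun y : V => P y ∧ y = x) = ∅ := by
      ext y
      simp only [Finset.mem_filter, Finset.mem_univ, true_and, Finset.notMem_empty, iff_false,
        not_and]
      rintro hy rfl
      exact h hy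
    rw [he, Finset.card_empty]

lemma card_filter_prod {V : Type*} (s t : Finset V) (P : V → V → Prop)
    [DecidableRel P] :
    ((s ×ˢ t).filter (fun p => P p.1 p.2)).card = ∑ x ∈ s, (t.filter (fun y => P x y)).card := by
  rw [Finset.card_filter, Finset.sum_product]
  simp only [Finset.card_filter]

lemma card_filter_prod' {V : Type*} (s t : Finset V) (P : V → V → Prop)
    [DecidableRel P] :
    ((s ×ˢ t).filter (fun p => P p.1 p.2)).card = ∑ y ∈ t, (s.filter (fun x => P x y)).card := by
  rw [Finset.card_filter, Finset.sum_product]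
  rw [Finset.sum_comm]
  simp only [Finset.card_filter]

lemma xor_congr' {a b a' b' : Prop} (ha : a ↔ a') (hb : b ↔ b') : Xor' a b ↔ Xor' a' b' := by
  unfold Xor'
  rw [ha, hb]

lemma xor_iff_not_of {a b : Prop} (hb : b) : Xor' a b ↔ ¬ a := by
  simp [Xor', Xor, hb]

lemma xor_iff_of_not {a b : Prop} (hb : ¬ b) : Xor' a b ↔ a := by
  simp [Xor', Xor, hb]

end AuxHelpers

section AuxCR

variable {V : Type*} {W : Type*} (G : SimpleGraph V) (c : V → W)

lemma crEquiv_refl : ∀ (t : ℕ) (v : V), crEquiv G c t v v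
  | 0, _ => rfl
  | (t + 1), v => ⟨crEquiv_refl t v, fun _ => rfl⟩

lemma crEquiv_symm : ∀ (t : ℕ) {u v : V}, crEquiv G c t u v → crEquiv G c t v u
  | 0, _, _, h => h.symm
  | (t + 1), _, _, h => ⟨crEquiv_symm t h.1, fun w => (h.2 w).symm⟩

lemma crEquiv_trans :
    ∀ (t : ℕ) {u v w : V}, crEquiv G c t u v → crEquiv G c t v w → crEquiv G c t u w
  | 0, _, _, _, h, h' => h.trans h'
  | (t + 1), _, _, _, h, h' => ⟨crEquiv_trans t h.1 h'.1, fun x => (h.2 x).trans (h'.2 x)⟩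

lemma crEquiv_mono {s t : ℕ} (hst : s ≤ t) {u v : V} (h : crEquiv G c t u v) :
    crEquiv G c s u v := by
  induction t with
  | zero =>
    obtain rfl : s = 0 := Nat.le_zero.mp hst
    exact h
  | succ t ih =>
    rcases Nat.lt_or_ge s (t + 1) with h' | h'
    · exact ih (Nat.lt_succ_iff.mp h') h.1
    · obtain rfl : s = t + 1 := Nat.le_antisymm hst h'
      exact h

variable [Fintype V]

lemma crStable_iff_exists : ∃ T : ℕ, ∀ u v : V, crStable G c u v ↔ crEquiv G c T u v := by
  classical
  let N : ℕ → ℕ := fun t => ((Finset.univ : Finset (V × V)).filter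
    (fun p => crEquiv G c t p.1 p.2)).card
  have hmem : sInf (Set.range N) ∈ Set.range N := Nat.sInf_mem ⟨N 0, 0, rfl⟩
  obtain ⟨T, hT⟩ := hmem
  have hsets : ∀ t, T ≤ t →
      (Finset.univ.filter (fun p : V × V => crEquiv G c t p.1 p.2)) =
      (Finset.univ.filter (fun p : V × V => crEquiv G c T p.1 p.2)) := by
    intro t ht
    apply Finset.eq_of_subset_of_card_le
    · intro p hp
      simp only [Finset.mem_filter] at hp ⊢
      exact ⟨hp.1, crEquiv_mono G c ht hp.2⟩
    · have h1 : sInf (Set.range N) ≤ N t := Nat.sInf_le ⟨t, rfl⟩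
      rw [← hT] at h1
      exact h1
  refine ⟨T, fun u v => ⟨fun h => h T, fun h t => ?_⟩⟩
  rcases Nat.le_total t T with h' | h'
  · exact crEquiv_mono G c h' h
  · have hm : (u, v) ∈ Finset.univ.filter (fun p : V × V => crEquiv G c T p.1 p.2) := by
      simp only [Finset.mem_filter, Finset.mem_univ, true_and]
      exact h
    rw [← hsets t h'] at hm
    simpa using hm

lemma crStable_stable {u v : V} (h : crStable G c u v) (x : V) :
    Nat.card {y : V // G.Adj u y ∧ crStable G c y x} =
    Nat.card {y : V // G.Adj v y ∧ crStable G c y x} := by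
  obtain ⟨T, hT⟩ := crStable_iff_exists G c
  have h2 := (h (T + 1)).2 x
  have e1 : ∀ w : V, Nat.card {y : V // G.Adj w y ∧ crStable G c y x} =
      Nat.card {y : V // G.Adj w y ∧ crEquiv G c T y x} := fun w =>
    Nat.card_congr (Equiv.subtypeEquivRight (fun y =>
      and_congr_right fun _ => hT y x))
  rw [e1, e1]
  exact h2

end AuxCR


section DisparityDet

open Finset

lemma xor_iff_not_of' {a b : Prop} (ha : a) : Xor' a b ↔ ¬ b := by
  simp [Xor', ha]

lemma xor_iff_of_not' {a b : Prop} (ha : ¬ a) : Xor' a b ↔ b := by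
  simp [Xor', ha]

lemma maj_symm_aux {V : Type*} (H : SimpleGraph V) (r : V → V → Prop) (u v : V) :
    majority H r u v ↔ majority H r v u := by
  unfold majority
  have e1 : Nat.card {p : V × V // p.1 ≠ p.2 ∧ r p.1 u ∧ r p.2 v}
      = Nat.card {p : V × V // p.1 ≠ p.2 ∧ r p.1 v ∧ r p.2 u} :=
    Nat.card_congr ((Equiv.prodComm V V).subtypeEquiv (fun p => by
      constructor
      · rintro ⟨h1, h2, h3⟩
        exact ⟨Ne.symm h1, h3, h2⟩
      · rintro ⟨h1, h2, h3⟩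
        exact ⟨Ne.symm h1, h3, h2⟩))
  have e2 : Nat.card {p : V × V // p.1 ≠ p.2 ∧ r p.1 u ∧ r p.2 v ∧ H.Adj p.1 p.2}
      = Nat.card {p : V × V // p.1 ≠ p.2 ∧ r p.1 v ∧ r p.2 u ∧ H.Adj p.1 p.2} :=
    Nat.card_congr ((Equiv.prodComm V V).subtypeEquiv (fun p => by
      constructor
      · rintro ⟨h1, h2, h3, h4⟩
        exact ⟨Ne.symm h1, h3, h2, h4.symm⟩
      · rintro ⟨h1, h2, h3, h4⟩
        exact ⟨Ne.symm h1, h3, h2, h4.symm⟩))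
  rw [e1, e2]

lemma maj_congr_aux {V : Type*} (H : SimpleGraph V) (r : V → V → Prop)
    (hsymm : ∀ {a b : V}, r a b → r b a)
    (htrans : ∀ {a b d : V}, r a b → r b d → r a d)
    {a a' : V} (h : r a a') (b : V) :
    majority H r a b ↔ majority H r a' b := by
  unfold majority
  have key : ∀ x : V, r x a ↔ r x a' :=
    fun x => ⟨fun hx => htrans hx h, fun hx => htrans hx (hsymm h)⟩
  have e1 : Nat.card {p : V × V // p.1 ≠ p.2 ∧ r p.1 a ∧ r p.2 b}
      = Nat.card {p : V × V // p.1 ≠ p.2 ∧ r p.1 a' ∧ r p.2 b} :=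
    Nat.card_congr (Equiv.subtypeEquivRight (fun p =>
      and_congr_right fun _ => and_congr_left' (key p.1)))
  have e2 : Nat.card {p : V × V // p.1 ≠ p.2 ∧ r p.1 a ∧ r p.2 b ∧ H.Adj p.1 p.2}
      = Nat.card {p : V × V // p.1 ≠ p.2 ∧ r p.1 a' ∧ r p.2 b ∧ H.Adj p.1 p.2} :=
    Nat.card_congr (Equiv.subtypeEquivRight (fun p =>
      and_congr_right fun _ => and_congr_left' (key p.1)))
  rw [e1, e2]

lemma disparity_adj_iff {V : Type*} (H : SimpleGraph V) (r : V → V → Prop) (v u : V) :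
    (disparity H r).Adj v u ↔ v ≠ u ∧ Xor' (H.Adj v u) (majority H r u v) := by
  unfold disparity
  rw [SimpleGraph.fromRel_adj]
  refine and_congr_right fun _ => ?_
  rw [show Xor' (H.Adj v u) (majority H r v u) ↔ Xor' (H.Adj v u) (majority H r u v) from
      xor_congr' Iff.rfl (maj_symm_aux H r v u),
    show Xor' (H.Adj u v) (majority H r u v) ↔ Xor' (H.Adj v u) (majority H r u v) from
      xor_congr' (H.adj_comm u v) Iff.rfl, or_self_iff]


lemma arith_case1 (x d e b cc : ℕ) (hde : d = e) (hbc : b = cc)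
    (hx : x + e + 1 = cc) (hk : cc ≤ 2 * e + 1) (he : e ≤ cc) (hd : d ≤ b) :
    x * cc ≤ d * (cc - e) + (b - d) * e := by
  have hx' : (x : ℤ) + e + 1 = cc := by exact_mod_cast hx
  have hk' : (cc : ℤ) ≤ 2 * e + 1 := by exact_mod_cast hk
  have he' : (e : ℤ) ≤ cc := by exact_mod_cast he
  have hde' : (d : ℤ) = e := by exact_mod_cast hde
  have hbc' : (b : ℤ) = cc := by exact_mod_cast hbc
  zify [he, hd]
  nlinarith [mul_nonneg (sub_nonneg.mpr he') (sub_nonneg.mpr hk')]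

lemma arith_case2 (d e b cc : ℕ) (hb2d : b ≤ 2 * d) (he : e ≤ cc) (hd : d ≤ b) :
    (b - d) * cc ≤ d * (cc - e) + (b - d) * e := by
  have hb2d' : (b : ℤ) ≤ 2 * d := by exact_mod_cast hb2d
  have he' : (e : ℤ) ≤ cc := by exact_mod_cast he
  have hd' : (d : ℤ) ≤ b := by exact_mod_cast hd
  zify [he, hd]
  nlinarith [mul_nonneg (sub_nonneg.mpr hb2d') (sub_nonneg.mpr he')]

lemma arith_case3 (d e b cc : ℕ) (h2d : 2 * d < b) (he : e ≤ cc) (hd : d ≤ b) :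
    d * cc ≤ d * (cc - e) + (b - d) * e := by
  have h2d' : 2 * (d : ℤ) < b := by exact_mod_cast h2d
  have he' : (e : ℤ) ≤ cc := by exact_mod_cast he
  zify [he, hd]
  nlinarith [mul_nonneg (by positivity : (0:ℤ) ≤ (e : ℤ)) (by linarith : (0:ℤ) ≤ (b : ℤ) - 2 * (d : ℤ))]

open Classical in
lemma per_class_bound {V : Type*} [Fintype V] [DecidableEq V] (H : SimpleGraph V)
    [DecidableRel H.Adj] (r : V → V → Prop) [DecidableRel r]
    (hsymm : ∀ {a b : V}, r a b → r b a)
    (htrans : ∀ {a b d : V}, r a b → r b d → r a d)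
    (hrefl : ∀ a : V, r a a)
    (hstab : ∀ a b : V, r a b → ∀ x : V,
      Nat.card {y : V // H.Adj a y ∧ r y x} = Nat.card {y : V // H.Adj b y ∧ r y x})
    (v u₀ : V) :
    ((Finset.univ.filter (fun u : V => r u₀ u)).filter
        (fun u => (disparity H r).Adj v u)).card
        * (Finset.univ.filter (fun w : V => r v w)).card
      ≤ ∑ u ∈ Finset.univ.filter (fun u : V => r u₀ u),
          ((Finset.univ.filter (fun w : V => r v w)).filter
            (fun w => Xor' (H.Adj v u) (H.Adj w u))).card := by
  classical
  set B : Finset V := Finset.univ.filter (fun u : V => r u₀ u) with hB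
  set C : Finset V := Finset.univ.filter (fun w : V => r v w) with hC
  have hmemB : ∀ {u : V}, u ∈ B ↔ r u₀ u := by intro u; simp [hB]
  have hmemC : ∀ {w : V}, w ∈ C ↔ r v w := by intro w; simp [hC]
  have hvC : v ∈ C := hmemC.mpr (hrefl v)
  have hu₀B : u₀ ∈ B := hmemB.mpr (hrefl u₀)
  have hcc : 0 < C.card := Finset.card_pos.mpr ⟨v, hvC⟩
  have hbpos : 0 < B.card := Finset.card_pos.mpr ⟨u₀, hu₀B⟩
  -- the common γ value on B
  have hγ : ∀ u ∈ B, (C.filter (fun w => H.Adj u w)).card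
      = (C.filter (fun w => H.Adj u₀ w)).card := by
    intro u hu
    have hconv : ∀ z : V, Finset.univ.filter (fun y : V => H.Adj z y ∧ r y v)
        = C.filter (fun w => H.Adj z w) := by
      intro z
      ext y
      simp only [hC, Finset.mem_filter, Finset.mem_univ, true_and]
      exact ⟨fun hh => ⟨hsymm hh.2, hh.1⟩, fun hh => ⟨hh.2, hsymm hh.1⟩⟩
    have hst := hstab u u₀ (hsymm (hmemB.mp hu)) v
    rw [ncard_filter, ncard_filter, hconv, hconv] at hst
    exact hst
  set e : ℕ := (C.filter (fun w => H.Adj u₀ w)).card with he_def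
  set d : ℕ := (B.filter (fun u => H.Adj v u)).card with hd_def
  have he_le : e ≤ C.card := Finset.card_filter_le _ _
  have hd_le : d ≤ B.card := Finset.card_filter_le _ _
  -- d is the common degree from C into B
  have hdw : ∀ w ∈ C, (B.filter (fun x => H.Adj w x)).card = d := by
    intro w hw
    have hconv : ∀ z : V, Finset.univ.filter (fun y : V => H.Adj z y ∧ r y u₀)
        = B.filter (fun x => H.Adj z x) := by
      intro z
      ext y
      simp only [hB, Finset.mem_filter, Finset.mem_univ, true_and]
      exact ⟨fun hh => ⟨hsymm hh.2, hh.1⟩, fun hh => ⟨hh.2, hsymm hh.1⟩⟩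
    have hst := hstab w v (hsymm (hmemC.mp hw)) u₀
    rw [ncard_filter, ncard_filter, hconv, hconv] at hst
    rw [hst, hd_def]
  -- edge double count : B.card * e = C.card * d
  have hE : B.card * e = C.card * d := by
    have h1 : ((B ×ˢ C).filter (fun p => H.Adj p.1 p.2)).card
        = ∑ x ∈ B, (C.filter (fun y => H.Adj x y)).card := card_filter_prod B C _
    have h2 : ((B ×ˢ C).filter (fun p => H.Adj p.1 p.2)).card
        = ∑ y ∈ C, (B.filter (fun x => H.Adj x y)).card := card_filter_prod' B C _
    have h1' : ∑ x ∈ B, (C.filter (fun y => H.Adj x y)).card = B.card * e := by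
      rw [Finset.sum_congr rfl (fun x hx => hγ x hx), Finset.sum_const, smul_eq_mul]
    have h2' : ∑ y ∈ C, (B.filter (fun x => H.Adj x y)).card = C.card * d := by
      have hh : ∀ y ∈ C, (B.filter (fun x => H.Adj x y)).card = d := by
        intro y hy
        rw [show B.filter (fun x => H.Adj x y) = B.filter (fun x => H.Adj y x) from by
          ext x; simp [H.adj_comm]]
        exact hdw y hy
      rw [Finset.sum_congr rfl hh, Finset.sum_const, smul_eq_mul]
    omega
  set t0 : ℕ := (B ∩ C).card with ht0_def
  have hPne : ((B ×ˢ C).filter (fun p : V × V => p.1 ≠ p.2)).card + t0 = B.card * C.card := by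
    have hsplit := Finset.card_filter_add_card_filter_not
      (s := B ×ˢ C) (p := fun p : V × V => p.1 ≠ p.2)
    have hdiag : ((B ×ˢ C).filter (fun p : V × V => ¬ p.1 ≠ p.2))
        = (B ∩ C).image (fun x => (x, x)) := by
      ext p
      simp only [Finset.mem_filter, Finset.mem_product, Finset.mem_image, Finset.mem_inter,
        not_not]
      constructor
      · rintro ⟨⟨h1, h2⟩, h3⟩
        exact ⟨p.1, ⟨h1, by rw [h3]; exact h2⟩, Prod.ext_iff.mpr ⟨rfl, h3⟩⟩
      · rintro ⟨x, ⟨hx1, hx2⟩, rfl⟩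
        exact ⟨⟨hx1, hx2⟩, rfl⟩
    have himg : ((B ∩ C).image (fun x => (x, x))).card = t0 := by
      rw [ht0_def]
      exact Finset.card_image_of_injective _ (fun a b hab => ((Prod.mk.injEq _ _ _ _).mp hab).1)
    rw [hdiag, himg, Finset.card_product] at hsplit
    omega
  have hAdjset : ((B ×ˢ C).filter (fun p : V × V => H.Adj p.1 p.2)).card = B.card * e := by
    rw [card_filter_prod]
    rw [Finset.sum_congr rfl (fun x hx => hγ x hx), Finset.sum_const, smul_eq_mul]
  have hmaj : majority H r u₀ v ↔ B.card * C.card - t0 ≤ 2 * (B.card * e) := by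
    unfold majority
    have c1 : Nat.card {p : V × V // p.1 ≠ p.2 ∧ r p.1 u₀ ∧ r p.2 v}
        = ((B ×ˢ C).filter (fun p : V × V => p.1 ≠ p.2)).card := by
      rw [ncard_filter]
      congr 1
      ext p
      simp only [hB, hC, Finset.mem_filter, Finset.mem_univ, true_and, Finset.mem_product]
      constructor
      · rintro ⟨h1, h2, h3⟩
        exact ⟨⟨hsymm h2, hsymm h3⟩, h1⟩
      · rintro ⟨⟨h2, h3⟩, h1⟩
        exact ⟨h1, hsymm h2, hsymm h3⟩
    have c2 : Nat.card {p : V × V // p.1 ≠ p.2 ∧ r p.1 u₀ ∧ r p.2 v ∧ H.Adj p.1 p.2}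
        = ((B ×ˢ C).filter (fun p : V × V => H.Adj p.1 p.2)).card := by
      rw [ncard_filter]
      congr 1
      ext p
      simp only [hB, hC, Finset.mem_filter, Finset.mem_univ, true_and, Finset.mem_product]
      constructor
      · rintro ⟨h1, h2, h3, h4⟩
        exact ⟨⟨hsymm h2, hsymm h3⟩, h4⟩
      · rintro ⟨⟨h2, h3⟩, h4⟩
        exact ⟨h4.ne, hsymm h2, hsymm h3, h4⟩
    rw [c1, c2, hAdjset]
    omega
  -- value of the inner summand
  have hgval : ∀ u ∈ B,
      (C.filter (fun w => Xor' (H.Adj v u) (H.Adj w u))).card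
      = if H.Adj v u then C.card - e else e := by
    intro u hu
    have hCadj : (C.filter (fun w => H.Adj w u)).card = e := by
      rw [show C.filter (fun w => H.Adj w u) = C.filter (fun w => H.Adj u w) from by
        ext w; simp [H.adj_comm]]
      exact hγ u hu
    by_cases hA : H.Adj v u
    · rw [if_pos hA]
      have hset : C.filter (fun w => Xor' (H.Adj v u) (H.Adj w u))
          = C.filter (fun w => ¬ H.Adj w u) := by
        ext w
        simp only [Finset.mem_filter, and_congr_right_iff]
        intro _
        exact xor_iff_not_of' hA
      rw [hset]
      have hsplitC := Finset.card_filter_add_card_filter_not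
        (s := C) (p := fun w => H.Adj w u)
      omega
    · rw [if_neg hA]
      have hset : C.filter (fun w => Xor' (H.Adj v u) (H.Adj w u))
          = C.filter (fun w => H.Adj w u) := by
        ext w
        simp only [Finset.mem_filter, and_congr_right_iff]
        intro _
        exact xor_iff_of_not' hA
      rw [hset, hCadj]
  have hS : ∑ u ∈ B, ((C.filter (fun w => Xor' (H.Adj v u) (H.Adj w u))).card)
      = d * (C.card - e) + (B.card - d) * e := by
    rw [Finset.sum_congr rfl hgval, Finset.sum_ite, Finset.sum_const, Finset.sum_const,
      smul_eq_mul, smul_eq_mul]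
    have hsplitB := Finset.card_filter_add_card_filter_not
      (s := B) (p := fun u => H.Adj v u)
    have h1 : (B.filter (fun u => H.Adj v u)).card = d := hd_def.symm
    have h2 : (B.filter (fun u => ¬ H.Adj v u)).card = B.card - d := by omega
    rw [h1, h2]
  have hdnadj : ∀ u ∈ B, ((disparity H r).Adj v u ↔
      v ≠ u ∧ Xor' (H.Adj v u) (majority H r u₀ v)) := by
    intro u hu
    rw [disparity_adj_iff]
    exact and_congr_right fun _ =>
      xor_congr' Iff.rfl (maj_congr_aux H r hsymm htrans (hsymm (hmemB.mp hu)) v)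
  rw [hS]
  by_cases hm : majority H r u₀ v
  · -- majority case
    have hdn : B.filter (fun u => (disparity H r).Adj v u)
        = B.filter (fun u => v ≠ u ∧ ¬ H.Adj v u) := by
      ext u
      simp only [Finset.mem_filter, and_congr_right_iff]
      intro hu
      rw [hdnadj u hu]
      exact and_congr_right fun _ => xor_iff_not_of hm
    have hsplitB := Finset.card_filter_add_card_filter_not
      (s := B) (p := fun u => H.Adj v u)
    by_cases hvB : v ∈ B
    · -- the class of u₀ is the class of v
      have hru₀v : r u₀ v := hmemB.mp hvB
      have hBC : B = C := by
        ext x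
        rw [hmemB, hmemC]
        exact ⟨fun hx => htrans (hsymm hru₀v) hx, fun hx => htrans hru₀v hx⟩
      have hbc : B.card = C.card := by rw [hBC]
      have ht0c : t0 = C.card := by rw [ht0_def, hBC, Finset.inter_self]
      have hde : d = e := by
        rw [hd_def, hBC]
        exact hγ v hvB
      have hm' := hmaj.mp hm
      rw [hbc, ht0c] at hm'
      have hkey : C.card ≤ 2 * e + 1 := by
        have h1 : C.card * C.card ≤ 2 * (C.card * e) + C.card := by omega
        rw [show 2 * (C.card * e) + C.card = C.card * (2 * e + 1) from by ring] at h1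
        exact Nat.le_of_mul_le_mul_left h1 hcc
      have hdncard : (B.filter (fun u => (disparity H r).Adj v u)).card + d + 1 = B.card := by
        rw [hdn]
        have hins : insert v (B.filter (fun u => v ≠ u ∧ ¬ H.Adj v u))
            = B.filter (fun u => ¬ H.Adj v u) := by
          ext u
          simp only [Finset.mem_insert, Finset.mem_filter]
          constructor
          · rintro (rfl | ⟨hu1, _, hu3⟩)
            · exact ⟨hvB, H.irrefl⟩
            · exact ⟨hu1, hu3⟩
          · rintro ⟨hu1, hu2⟩
            by_cases h : v = u
            · exact Or.inl h.symm
            · exact Or.inr ⟨hu1, h, hu2⟩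
        have hnm : v ∉ B.filter (fun u => v ≠ u ∧ ¬ H.Adj v u) := by
          simp [Finset.mem_filter]
        have hci := Finset.card_insert_of_notMem hnm
        rw [hins] at hci
        omega
      have hx := hdncard
      rw [hde, hbc] at hx
      exact arith_case1 _ _ _ _ _ hde hbc hx hkey he_le hd_le
    · -- disjoint classes
      have ht0 : t0 = 0 := by
        rw [ht0_def, Finset.card_eq_zero, Finset.eq_empty_iff_forall_notMem]
        intro x hx
        rw [Finset.mem_inter] at hx
        exact hvB (hmemB.mpr (htrans (hmemB.mp hx.1) (hsymm (hmemC.mp hx.2))))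
      have hm' := hmaj.mp hm
      rw [ht0] at hm'
      have hm'' : B.card * C.card ≤ 2 * (B.card * e) := by omega
      have hb2d : B.card ≤ 2 * d := by
        have h1 : C.card * B.card ≤ C.card * (2 * d) := by
          calc C.card * B.card = B.card * C.card := by ring
            _ ≤ 2 * (B.card * e) := hm''
            _ = 2 * (C.card * d) := by rw [hE]
            _ = C.card * (2 * d) := by ring
        exact Nat.le_of_mul_le_mul_left h1 hcc
      have hdn2 : (B.filter (fun u => (disparity H r).Adj v u)).card = B.card - d := by
        rw [hdn]
        have heq2 : B.filter (fun u => v ≠ u ∧ ¬ H.Adj v u)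
            = B.filter (fun u => ¬ H.Adj v u) := by
          ext u
          simp only [Finset.mem_filter, and_congr_right_iff]
          intro hu
          constructor
          · exact fun h => h.2
          · intro h
            refine ⟨fun hvu => hvB ?_, h⟩
            rw [hvu]; exact hu
        rw [heq2]
        omega
      rw [hdn2]
      exact arith_case2 _ _ _ _ hb2d he_le hd_le
  · -- minority case
    have hdn : B.filter (fun u => (disparity H r).Adj v u)
        = B.filter (fun u => H.Adj v u) := by
      ext u
      simp only [Finset.mem_filter, and_congr_right_iff]
      intro hu
      rw [hdnadj u hu]
      constructor
      · rintro ⟨-, hx⟩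
        exact (xor_iff_of_not hm).mp hx
      · intro h
        refine ⟨fun hveq => ?_, (xor_iff_of_not hm).mpr h⟩
        rw [hveq] at h
        exact H.irrefl h
    rw [hdn, ← hd_def]
    have hmm' : 2 * (B.card * e) < B.card * C.card - t0 := not_le.mp (fun h => hm (hmaj.mpr h))
    have h1 : 2 * (B.card * e) < B.card * C.card := by omega
    have h2d : 2 * d < B.card := by
      have h2 : C.card * (2 * d) < C.card * B.card := by
        calc C.card * (2 * d) = 2 * (C.card * d) := by ring
          _ = 2 * (B.card * e) := by rw [hE]
          _ < B.card * C.card := h1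
          _ = C.card * B.card := by ring
      exact Nat.lt_of_mul_lt_mul_left h2
    exact arith_case3 _ _ _ _ h2d he_le hd_le

lemma disparity_deg_le {V : Type*} [Fintype V] (H : SimpleGraph V) (r : V → V → Prop)
    (hsymm : ∀ {a b : V}, r a b → r b a)
    (htrans : ∀ {a b d : V}, r a b → r b d → r a d)
    (hrefl : ∀ a : V, r a a)
    (hstab : ∀ a b : V, r a b → ∀ x : V,
      Nat.card {y : V // H.Adj a y ∧ r y x} = Nat.card {y : V // H.Adj b y ∧ r y x})
    (v : V) (K : ℕ)
    (hK : ∀ w : V, r v w → ∀ (inst : DecidablePred (fun x : V => Xor' (H.Adj v x) (H.Adj w x))),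
      (Finset.univ.filter (fun x : V => Xor' (H.Adj v x) (H.Adj w x))).card ≤ K) :
    Nat.card {u : V // (disparity H r).Adj v u} ≤ K := by
  classical
  rw [ncard_filter]
  have hvC : v ∈ Finset.univ.filter (fun w : V => r v w) := by
    simp [hrefl v]
  have hcc : 0 < (Finset.univ.filter (fun w : V => r v w)).card :=
    Finset.card_pos.mpr ⟨v, hvC⟩
  have hfiber : ∀ u₀ : V, Finset.univ.filter
      (fun u : V => (Finset.univ.filter (fun x : V => r u x))
        = (Finset.univ.filter (fun x : V => r u₀ x)))
      = Finset.univ.filter (fun u : V => r u₀ u) := by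
    intro u₀
    ext u
    simp only [Finset.mem_filter, Finset.mem_univ, true_and]
    constructor
    · intro h
      have h1 : u ∈ Finset.univ.filter (fun x : V => r u x) := by simp [hrefl u]
      rw [h] at h1
      simpa using h1
    · intro h
      ext x
      simp only [Finset.mem_filter, Finset.mem_univ, true_and]
      exact ⟨fun hx => htrans h hx, fun hx => htrans (hsymm h) hx⟩
  have master : ∀ g : V → ℕ, ∑ u : V, g u
      = ∑ t ∈ Finset.univ.image (fun u : V => Finset.univ.filter (fun x : V => r u x)),
          ∑ u ∈ Finset.univ.filter
            (fun u : V => (Finset.univ.filter (fun x : V => r u x)) = t), g u := by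
    intro g
    exact (Finset.sum_fiberwise_of_maps_to
      (fun x _ => Finset.mem_image_of_mem _ (Finset.mem_univ x)) g).symm
  have key : ∑ u : V, (if (disparity H r).Adj v u
        then (Finset.univ.filter (fun w : V => r v w)).card else 0)
      ≤ ∑ u : V, ((Finset.univ.filter (fun w : V => r v w)).filter
          (fun w => Xor' (H.Adj v u) (H.Adj w u))).card := by
    rw [master (fun u => if (disparity H r).Adj v u
        then (Finset.univ.filter (fun w : V => r v w)).card else 0),
      master (fun u => ((Finset.univ.filter (fun w : V => r v w)).filter
          (fun w => Xor' (H.Adj v u) (H.Adj w u))).card)]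
    apply Finset.sum_le_sum
    intro t ht
    obtain ⟨u₀, -, rfl⟩ := Finset.mem_image.mp ht
    rw [hfiber u₀]
    have hL : ∑ u ∈ Finset.univ.filter (fun u : V => r u₀ u),
        (if (disparity H r).Adj v u
          then (Finset.univ.filter (fun w : V => r v w)).card else 0)
        = ((Finset.univ.filter (fun u : V => r u₀ u)).filter
            (fun u => (disparity H r).Adj v u)).card
          * (Finset.univ.filter (fun w : V => r v w)).card := by
      rw [← Finset.sum_filter, Finset.sum_const, smul_eq_mul]
    rw [hL]
    exact per_class_bound H r hsymm htrans hrefl hstab v u₀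
  have hLHS : ∑ u : V, (if (disparity H r).Adj v u
        then (Finset.univ.filter (fun w : V => r v w)).card else 0)
      = (Finset.univ.filter (fun u : V => (disparity H r).Adj v u)).card
        * (Finset.univ.filter (fun w : V => r v w)).card := by
    rw [← Finset.sum_filter, Finset.sum_const, smul_eq_mul]
  have hRHS : ∑ u : V, ((Finset.univ.filter (fun w : V => r v w)).filter
        (fun w => Xor' (H.Adj v u) (H.Adj w u))).card
      ≤ (Finset.univ.filter (fun w : V => r v w)).card * K := by
    have hswap : ∑ u : V, ((Finset.univ.filter (fun w : V => r v w)).filter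
        (fun w => Xor' (H.Adj v u) (H.Adj w u))).card
        = ∑ w ∈ Finset.univ.filter (fun w : V => r v w),
            (Finset.univ.filter (fun x : V => Xor' (H.Adj v x) (H.Adj w x))).card := by
      simp only [Finset.card_filter]
      exact Finset.sum_comm
    rw [hswap]
    calc ∑ w ∈ Finset.univ.filter (fun w : V => r v w),
          (Finset.univ.filter (fun x : V => Xor' (H.Adj v x) (H.Adj w x))).card
        ≤ ∑ _w ∈ Finset.univ.filter (fun w : V => r v w), K :=
          Finset.sum_le_sum (fun w hw => hK w (by simpa using hw) _)
      _ = (Finset.univ.filter (fun w : V => r v w)).card * K := by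
          rw [Finset.sum_const, smul_eq_mul]
  have hfinal : (Finset.univ.filter (fun u : V => (disparity H r).Adj v u)).card
      * (Finset.univ.filter (fun w : V => r v w)).card
      ≤ (Finset.univ.filter (fun w : V => r v w)).card * K := by
    rw [← hLHS]
    exact le_trans key hRHS
  rw [mul_comm] at hfinal
  exact Nat.le_of_mul_le_mul_left hfinal hcc

end DisparityDet


section AuxProb

open MeasureTheory ENNReal Finset

lemma crEquiv_one_adj {V : Type*} {W : Type*} [Fintype V] (G : SimpleGraph V) (c : V → W)
    (f : V → Bool) {v w x : V} (h : crEquiv G (refineColor c f) 1 v w) (hx : f x = true) :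
    (G.Adj v x ↔ G.Adj w x) := by
  classical
  have h2 := (show crEquiv G (refineColor c f) (0 + 1) v w from h).2 x
  have key : ∀ y : V, (crEquiv G (refineColor c f) 0 y x) ↔ y = x := by
    intro y
    show refineColor c f y = refineColor c f x ↔ y = x
    constructor
    · intro hy
      by_cases hfy : f y = true
      · simp only [refineColor, hfy, hx, if_true] at hy
        exact Sum.inr.inj hy
      · simp only [refineColor, hfy, hx, if_true, if_false] at hy
        simp at hy
    · rintro rfl
      rfl
  have e : ∀ u' : V, Nat.card {y : V // G.Adj u' y ∧ crEquiv G (refineColor c f) 0 y x}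
      = if G.Adj u' x then 1 else 0 := by
    intro u'
    rw [← point_count (fun y : V => G.Adj u' y) x]
    exact Nat.card_congr (Equiv.subtypeEquivRight fun y =>
      and_congr_right fun _ => key y)
  rw [e, e] at h2
  by_cases h1 : G.Adj v x <;> by_cases h2' : G.Adj w x <;>
    simp [h1, h2'] at h2 ⊢

lemma sum_prod_bool {ι : Type*} [Fintype ι] [DecidableEq ι] (h : ι → Bool → ENNReal) :
    ∑ f : ι → Bool, ∏ i : ι, h i (f i) = ∏ i : ι, (h i false + h i true) := by
  have h1 : ∏ i : ι, (∑ b : Bool, h i b)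
      = ∑ f ∈ Fintype.piFinset (fun _ : ι => (Finset.univ : Finset Bool)),
          ∏ i : ι, h i (f i) := Finset.prod_univ_sum _ _
  rw [Fintype.piFinset_univ] at h1
  rw [← h1]
  refine Finset.prod_congr rfl fun i _ => ?_
  rw [Fintype.sum_bool]
  exact add_comm _ _

lemma bernoulliProduct_apply {ι : Type*} [Fintype ι] [DecidableEq ι] (q : ι → ℝ)
    (s : Set (ι → Bool)) :
    bernoulliProduct ι q s
      = ∑ f : ι → Bool,
          (∏ i : ι, if f i then ENNReal.ofReal (q i) else ENNReal.ofReal (1 - q i))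
            * s.indicator 1 f := by
  unfold bernoulliProduct
  rw [MeasureTheory.Measure.finset_sum_apply]
  refine Finset.sum_congr rfl fun f _ => ?_
  rw [MeasureTheory.Measure.smul_apply,
    MeasureTheory.Measure.dirac_apply' _ (MeasurableSet.of_discrete), smul_eq_mul]

lemma bernoulliProduct_univ {ι : Type*} [Fintype ι] [DecidableEq ι] (q : ι → ℝ)
    (hq : ∀ i, 0 ≤ q i ∧ q i ≤ 1) :
    bernoulliProduct ι q Set.univ = 1 := by
  rw [bernoulliProduct_apply]
  simp only [Set.indicator_univ, Pi.one_apply, mul_one]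
  calc ∑ f : ι → Bool, ∏ i : ι, (if f i then ENNReal.ofReal (q i)
          else ENNReal.ofReal (1 - q i))
      = ∏ i : ι, ((if (false : Bool) then ENNReal.ofReal (q i) else ENNReal.ofReal (1 - q i))
          + (if (true : Bool) then ENNReal.ofReal (q i) else ENNReal.ofReal (1 - q i))) :=
        sum_prod_bool (fun i b => if b then ENNReal.ofReal (q i)
          else ENNReal.ofReal (1 - q i))
    _ = 1 := by
        apply Finset.prod_eq_one
        intro i _
        show ENNReal.ofReal (1 - q i) + ENNReal.ofReal (q i) = 1
        rw [← ENNReal.ofReal_add (by linarith [(hq i).2]) (hq i).1]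
        norm_num

lemma bernoulliProduct_allfalse {ι : Type*} [Fintype ι] [DecidableEq ι] (q : ι → ℝ)
    (hq : ∀ i, 0 ≤ q i ∧ q i ≤ 1) (T : Finset ι) :
    bernoulliProduct ι q {f : ι → Bool | ∀ i ∈ T, f i = false}
      ≤ ∏ i ∈ T, ENNReal.ofReal (1 - q i) := by
  classical
  rw [bernoulliProduct_apply]
  have hterm : ∀ f : ι → Bool,
      (∏ i : ι, if f i then ENNReal.ofReal (q i) else ENNReal.ofReal (1 - q i))
        * ({f : ι → Bool | ∀ i ∈ T, f i = false}).indicator 1 f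
      = ∏ i : ι, (if f i then (if i ∈ T then 0 else ENNReal.ofReal (q i))
          else ENNReal.ofReal (1 - q i)) := by
    intro f
    by_cases hf : f ∈ {f : ι → Bool | ∀ i ∈ T, f i = false}
    · rw [Set.indicator_of_mem hf, Pi.one_apply, mul_one]
      refine Finset.prod_congr rfl fun i _ => ?_
      by_cases hfi : f i
      · have hiT : i ∉ T := fun hiT => by
          have hff := hf i hiT
          rw [hfi] at hff
          exact absurd hff (by simp)
        rw [if_pos hfi, if_pos hfi, if_neg hiT]
      · rw [if_neg hfi, if_neg hfi]
    · rw [Set.indicator_of_notMem hf, mul_zero]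
      have hf' : ∃ i ∈ T, f i ≠ false := by
        by_contra hc
        push_neg at hc
        exact hf (fun i hi => hc i hi)
      obtain ⟨i₀, hi₀T, hfi₀⟩ := hf'
      have hfi₀' : f i₀ = true := by
        revert hfi₀; cases f i₀ <;> simp
      symm
      apply Finset.prod_eq_zero (Finset.mem_univ i₀)
      rw [if_pos hfi₀', if_pos hi₀T]
  refine le_trans (le_of_eq (Finset.sum_congr rfl (fun f _ => hterm f))) ?_
  refine le_trans (le_of_eq (sum_prod_bool (fun i b => if b then
      (if i ∈ T then 0 else ENNReal.ofReal (q i)) else ENNReal.ofReal (1 - q i)))) ?_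
  refine le_trans (Finset.prod_le_prod'
      (g := fun i => if i ∈ T then ENNReal.ofReal (1 - q i) else 1) ?_) ?_
  · intro i _
    show ENNReal.ofReal (1 - q i) + (if i ∈ T then 0 else ENNReal.ofReal (q i))
        ≤ (if i ∈ T then ENNReal.ofReal (1 - q i) else 1)
    by_cases hiT : i ∈ T
    · rw [if_pos hiT, if_pos hiT, add_zero]
    · rw [if_neg hiT, if_neg hiT]
      rw [← ENNReal.ofReal_add (by linarith [(hq i).2]) (hq i).1]
      norm_num
  · rw [Finset.prod_ite_mem, Finset.univ_inter]

end AuxProb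


/-- Lemma 5.6.
For an `n`-vertex graph `H` with equitable colouring `c`, if each vertex is independently
given a brand-new unique colour with probability at least `0.7`, then whp the disparity graph
`D(H, R*c')` of the resulting refined colouring has maximum degree at most `4·log n`. -/
theorem stmt14 (Ω : ℕ → Type) (H : ∀ n : ℕ, SimpleGraph (Fin n))
    (c : ∀ n : ℕ, Fin n → Ω n) (heq : ∀ n, IsEquitable (H n) (c n))
    (q : ∀ n : ℕ, Fin n → ℝ) (hq : ∀ n v, 0.7 ≤ q n v ∧ q n v ≤ 1) :
    Tendsto (fun n : ℕ =>
      bernoulliProduct (Fin n) (q n)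
        {f | ∀ v : Fin n,
          (Nat.card {u : Fin n //
              (disparity (H n) (crStable (H n) (refineColor (c n) f))).Adj v u} : ℝ)
            ≤ 4 * Real.log n})
      atTop (nhds 1) := by
  classical
  have hL : Real.log 0.3 < -1 := by
    rw [Real.log_lt_iff_lt_exp (by norm_num : (0:ℝ) < 0.3)]
    have key : (0.3 : ℝ) * Real.exp 1 < 1 := by
      nlinarith [Real.exp_one_lt_d9]
    have hpos : (0:ℝ) < Real.exp 1 := Real.exp_pos 1
    calc (0.3 : ℝ) = 0.3 * Real.exp 1 * (Real.exp 1)⁻¹ := by field_simp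
      _ < 1 * (Real.exp 1)⁻¹ := mul_lt_mul_of_pos_right key (inv_pos.mpr hpos)
      _ = Real.exp (-1) := by rw [one_mul, Real.exp_neg]
  set L : ℝ := Real.log 0.3 with hLdef
  set δ : ℕ → ℝ := fun m => (m:ℝ)^2 * Real.exp ((4 * Real.log m) * L) with hδdef
  have hmain : ∀ n : ℕ, 1 ≤ n →
      (1 : ENNReal) - ENNReal.ofReal (δ n) ≤ bernoulliProduct (Fin n) (q n)
        {f | ∀ v : Fin n,
          (Nat.card {u : Fin n //
              (disparity (H n) (crStable (H n) (refineColor (c n) f))).Adj v u} : ℝ)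
            ≤ 4 * Real.log n}
      ∧ bernoulliProduct (Fin n) (q n)
        {f | ∀ v : Fin n,
          (Nat.card {u : Fin n //
              (disparity (H n) (crStable (H n) (refineColor (c n) f))).Adj v u} : ℝ)
            ≤ 4 * Real.log n} ≤ 1 := by
    intro n hn
    have hq0 : ∀ i, 0 ≤ q n i ∧ q n i ≤ 1 :=
      fun i => ⟨le_trans (by norm_num) (hq n i).1, (hq n i).2⟩
    have huniv := bernoulliProduct_univ (q n) hq0
    have hupper : bernoulliProduct (Fin n) (q n)
        {f | ∀ v : Fin n,
          (Nat.card {u : Fin n //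
              (disparity (H n) (crStable (H n) (refineColor (c n) f))).Adj v u} : ℝ)
            ≤ 4 * Real.log n} ≤ 1 :=
      le_trans (measure_mono (Set.subset_univ _)) (le_of_eq huniv)
    refine ⟨?_, hupper⟩
    have hlogn : (0:ℝ) ≤ Real.log n := Real.log_nonneg (by exact_mod_cast hn)
    have h4log : (0:ℝ) ≤ 4 * Real.log n := by linarith
    set Δd : Fin n → Fin n → Finset (Fin n) := fun x y =>
      Finset.univ.filter (fun z => Xor' ((H n).Adj x z) ((H n).Adj y z)) with hΔdef
    set bp : Finset (Fin n × Fin n) := Finset.univ.filter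
      (fun p => ¬ (((Δd p.1 p.2).card : ℝ) ≤ 4 * Real.log n)) with hbpdef
    have hsub : {f : Fin n → Bool | ∀ p ∈ bp, ¬ crEquiv (H n) (refineColor (c n) f) 1 p.1 p.2}
        ⊆ {f | ∀ v : Fin n,
          (Nat.card {u : Fin n //
              (disparity (H n) (crStable (H n) (refineColor (c n) f))).Adj v u} : ℝ)
            ≤ 4 * Real.log n} := by
      intro f hf v
      have hrsymm : ∀ {a b : Fin n}, crStable (H n) (refineColor (c n) f) a b →
          crStable (H n) (refineColor (c n) f) b a :=
        fun h t => crEquiv_symm _ _ t (h t)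
      have hrtrans : ∀ {a b d : Fin n}, crStable (H n) (refineColor (c n) f) a b →
          crStable (H n) (refineColor (c n) f) b d →
          crStable (H n) (refineColor (c n) f) a d :=
        fun h h' t => crEquiv_trans _ _ t (h t) (h' t)
      have hrrefl : ∀ a : Fin n, crStable (H n) (refineColor (c n) f) a a :=
        fun a t => crEquiv_refl _ _ t a
      have hK : ∀ w : Fin n, crStable (H n) (refineColor (c n) f) v w →
          ∀ (_inst : DecidablePred fun x : Fin n => Xor' ((H n).Adj v x) ((H n).Adj w x)),
          (Finset.univ.filter (fun x : Fin n => Xor' ((H n).Adj v x) ((H n).Adj w x))).card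
            ≤ ⌊4 * Real.log n⌋₊ := by
        intro w hw _inst
        have hcards : (Finset.univ.filter
            (fun x : Fin n => Xor' ((H n).Adj v x) ((H n).Adj w x))).card
            = (Δd v w).card := by
          rw [hΔdef]
          congr
        rw [hcards]
        by_cases hbp2 : ((Δd v w).card : ℝ) ≤ 4 * Real.log n
        · exact Nat.le_floor hbp2
        · exact absurd (hw 1) (hf (v, w) (by
            rw [hbpdef]
            simp only [Finset.mem_filter, Finset.mem_univ, true_and]
            exact hbp2))
      have hdeg := disparity_deg_le (H n) (crStable (H n) (refineColor (c n) f))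
        hrsymm hrtrans hrrefl (fun a b hab x => crStable_stable _ _ hab x)
        v ⌊4 * Real.log n⌋₊ hK
      calc ((Nat.card {u : Fin n //
            (disparity (H n) (crStable (H n) (refineColor (c n) f))).Adj v u} : ℕ) : ℝ)
          ≤ (⌊4 * Real.log n⌋₊ : ℝ) := by exact_mod_cast hdeg
        _ ≤ 4 * Real.log n := Nat.floor_le h4log
    have hbadsub : {f : Fin n → Bool |
          ∀ p ∈ bp, ¬ crEquiv (H n) (refineColor (c n) f) 1 p.1 p.2}ᶜ
        ⊆ ⋃ p ∈ bp, {f : Fin n → Bool | ∀ x ∈ Δd p.1 p.2, f x = false} := by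
      intro f hf
      have hf' : ∃ p ∈ bp, crEquiv (H n) (refineColor (c n) f) 1 p.1 p.2 := by
        by_contra hc
        push_neg at hc
        exact hf (fun p hp => hc p hp)
      obtain ⟨p, hpbp, hp⟩ := hf'
      refine Set.mem_biUnion hpbp ?_
      intro x hx
      by_contra hfx
      have hfx' : f x = true := by
        revert hfx; cases hc : f x <;> simp
      have hiff := crEquiv_one_adj (H n) (c n) f hp hfx'
      have hx2 : Xor' ((H n).Adj p.1 x) ((H n).Adj p.2 x) := by
        rw [hΔdef] at hx
        simpa using hx
      rcases hx2 with ⟨ha, hb⟩ | ⟨ha, hb⟩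
      · exact hb (hiff.mp ha)
      · exact hb (hiff.mpr ha)
    have hmeas : bernoulliProduct (Fin n) (q n)
        ({f : Fin n → Bool | ∀ p ∈ bp, ¬ crEquiv (H n) (refineColor (c n) f) 1 p.1 p.2}ᶜ)
        ≤ ENNReal.ofReal (δ n) := by
      have h3 : ∀ p ∈ bp, bernoulliProduct (Fin n) (q n)
          {f : Fin n → Bool | ∀ x ∈ Δd p.1 p.2, f x = false}
          ≤ ENNReal.ofReal (Real.exp ((4 * Real.log n) * L)) := by
        intro p hpbp
        have hcard : 4 * Real.log n < ((Δd p.1 p.2).card : ℝ) := by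
          have hmem := Finset.mem_filter.mp (hbpdef ▸ hpbp)
          exact not_le.mp hmem.2
        have hb4 : (0.3:ℝ) ^ (Δd p.1 p.2).card ≤ Real.exp ((4 * Real.log n) * L) := by
          have hexp : (0.3:ℝ) ^ (Δd p.1 p.2).card
              = Real.exp (((Δd p.1 p.2).card : ℝ) * L) := by
            rw [Real.exp_nat_mul, hLdef, Real.exp_log (by norm_num : (0:ℝ) < 0.3)]
          rw [hexp]
          apply Real.exp_le_exp.mpr
          have hLle : L ≤ 0 := by rw [hLdef]; linarith [hL]
          exact mul_le_mul_of_nonpos_right (le_of_lt hcard) hLle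
        calc bernoulliProduct (Fin n) (q n)
              {f : Fin n → Bool | ∀ x ∈ Δd p.1 p.2, f x = false}
            ≤ ∏ x ∈ Δd p.1 p.2, ENNReal.ofReal (1 - q n x) :=
              bernoulliProduct_allfalse (q n) hq0 (Δd p.1 p.2)
          _ ≤ ∏ _x ∈ Δd p.1 p.2, ENNReal.ofReal 0.3 :=
              Finset.prod_le_prod' (fun i _ => ENNReal.ofReal_le_ofReal (by
                linarith [(hq n i).1]))
          _ = ENNReal.ofReal 0.3 ^ (Δd p.1 p.2).card := Finset.prod_const _
          _ = ENNReal.ofReal ((0.3:ℝ) ^ (Δd p.1 p.2).card) :=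
              (ENNReal.ofReal_pow (by norm_num : (0:ℝ) ≤ 0.3) _).symm
          _ ≤ ENNReal.ofReal (Real.exp ((4 * Real.log n) * L)) :=
              ENNReal.ofReal_le_ofReal hb4
      have hbpcard : bp.card ≤ n * n := by
        calc bp.card ≤ (Finset.univ : Finset (Fin n × Fin n)).card :=
              Finset.card_filter_le _ _
          _ = n * n := by simp [Finset.card_univ]
      calc bernoulliProduct (Fin n) (q n)
            ({f : Fin n → Bool | ∀ p ∈ bp, ¬ crEquiv (H n) (refineColor (c n) f) 1 p.1 p.2}ᶜ)
          ≤ bernoulliProduct (Fin n) (q n)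
            (⋃ p ∈ bp, {f : Fin n → Bool | ∀ x ∈ Δd p.1 p.2, f x = false}) :=
            measure_mono hbadsub
        _ ≤ ∑ p ∈ bp, bernoulliProduct (Fin n) (q n)
            {f : Fin n → Bool | ∀ x ∈ Δd p.1 p.2, f x = false} :=
            measure_biUnion_finset_le _ _
        _ ≤ ∑ _p ∈ bp, ENNReal.ofReal (Real.exp ((4 * Real.log n) * L)) :=
            Finset.sum_le_sum h3
        _ = bp.card • ENNReal.ofReal (Real.exp ((4 * Real.log n) * L)) :=
            Finset.sum_const _
        _ ≤ ENNReal.ofReal (δ n) := by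
            rw [nsmul_eq_mul]
            have hc1 : (bp.card : ENNReal) ≤ ((n*n : ℕ) : ENNReal) := by
              exact_mod_cast hbpcard
            calc (bp.card : ENNReal) * ENNReal.ofReal (Real.exp ((4 * Real.log n) * L))
                ≤ ((n*n:ℕ) : ENNReal) * ENNReal.ofReal (Real.exp ((4 * Real.log n) * L)) :=
                  mul_le_mul_left hc1 _
              _ = ENNReal.ofReal (((n*n:ℕ):ℝ))
                  * ENNReal.ofReal (Real.exp ((4 * Real.log n) * L)) := by
                  rw [ENNReal.ofReal_natCast]
              _ = ENNReal.ofReal (((n*n:ℕ):ℝ) * Real.exp ((4 * Real.log n) * L)) := by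
                  rw [← ENNReal.ofReal_mul (by positivity)]
              _ = ENNReal.ofReal (δ n) := by
                  rw [hδdef]
                  congr 1
                  push_cast
                  ring
    have hunion : (1:ENNReal) ≤ bernoulliProduct (Fin n) (q n)
        {f | ∀ v : Fin n,
          (Nat.card {u : Fin n //
              (disparity (H n) (crStable (H n) (refineColor (c n) f))).Adj v u} : ℝ)
            ≤ 4 * Real.log n} + ENNReal.ofReal (δ n) := by
      calc (1:ENNReal) = bernoulliProduct (Fin n) (q n)
            ({f : Fin n → Bool | ∀ p ∈ bp, ¬ crEquiv (H n) (refineColor (c n) f) 1 p.1 p.2}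
              ∪ {f : Fin n → Bool |
                  ∀ p ∈ bp, ¬ crEquiv (H n) (refineColor (c n) f) 1 p.1 p.2}ᶜ) := by
            rw [Set.union_compl_self]; exact huniv.symm
        _ ≤ bernoulliProduct (Fin n) (q n)
              {f : Fin n → Bool | ∀ p ∈ bp, ¬ crEquiv (H n) (refineColor (c n) f) 1 p.1 p.2}
            + bernoulliProduct (Fin n) (q n)
              ({f : Fin n → Bool |
                  ∀ p ∈ bp, ¬ crEquiv (H n) (refineColor (c n) f) 1 p.1 p.2}ᶜ) :=
            measure_union_le _ _
        _ ≤ _ := add_le_add (measure_mono hsub) hmeas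
    exact tsub_le_iff_right.mpr hunion
  have hlog : Tendsto (fun m : ℕ => Real.log m) atTop atTop :=
    Real.tendsto_log_atTop.comp tendsto_natCast_atTop_atTop
  have hc : (0:ℝ) < -(2 + 4*L) := by linarith [hL]
  have h1 : Tendsto (fun m : ℕ => (-(2+4*L)) * Real.log m) atTop atTop :=
    Filter.Tendsto.const_mul_atTop hc hlog
  have h2 : Tendsto (fun m : ℕ => (2+4*L) * Real.log m) atTop atBot := by
    have h3 := tendsto_neg_atTop_atBot.comp h1
    refine h3.congr (fun m => ?_)
    simp only [Function.comp_apply]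
    ring
  have h3 : Tendsto (fun m : ℕ => Real.exp ((2+4*L) * Real.log m)) atTop (nhds 0) :=
    Real.tendsto_exp_atBot.comp h2
  have hδ0 : Tendsto δ atTop (nhds 0) := by
    refine h3.congr' ?_
    filter_upwards [eventually_ge_atTop 1] with m hm
    have hmpos : (0:ℝ) < m := by exact_mod_cast hm
    rw [hδdef]
    show Real.exp ((2+4*L) * Real.log m) = (m:ℝ)^2 * Real.exp ((4 * Real.log m) * L)
    rw [show (2+4*L) * Real.log m
        = Real.log m + (Real.log m + (4 * Real.log m) * L) from by ring,
      Real.exp_add, Real.exp_add, Real.exp_log hmpos]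
    ring
  have hof : Tendsto (fun m : ℕ => ENNReal.ofReal (δ m)) atTop (nhds 0) := by
    have h4 := ENNReal.tendsto_ofReal hδ0
    simpa using h4
  have hlow : Tendsto (fun m : ℕ => (1:ENNReal) - ENNReal.ofReal (δ m)) atTop (nhds 1) := by
    have h5 := ENNReal.Tendsto.sub
      (tendsto_const_nhds : Tendsto (fun _ : ℕ => (1:ENNReal)) atTop (nhds 1)) hof
      (Or.inl (by norm_num))
    simpa using h5
  refine tendsto_of_tendsto_of_tendsto_of_le_of_le' hlow tendsto_const_nhds ?_ ?_
  · filter_upwards [eventually_ge_atTop 1] with m hm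
    exact (hmain m hm).1
  · filter_upwards [eventually_ge_atTop 1] with m hm
    exact (hmain m hm).2
end

section
/- Let k ≥ 1 be an integer and let G be a connected finite graph containing no connected subgraph on at most 20k vertices with at least two cycles (equivalently, no connected subgraph on at most 20k vertices whose number of edges exceeds its number of vertices). Let u, v be two distinct vertices in V_{2,3}(G). Then for every i with 1 ≤ i ≤ k there is a vertex w such that either dist_G(u,w) = i and dist_G(v,w) > i, or dist_G(v,w) = i and dist_G(u,w) > i. -/
open MeasureTheory Filter

namespace S19

variable {V : Type*}

open Classical in
/-- Parent of `x` in a BFS tree rooted at `u`. -/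
noncomputable def par (G : SimpleGraph V) (u x : V) : V :=
  if h : ∃ y, G.Adj x y ∧ G.dist u y + 1 = G.dist u x then h.choose else u

lemma exists_par {G : SimpleGraph V} {u x : V} (hconn : G.Connected) (hx : x ≠ u) :
    ∃ y, G.Adj x y ∧ G.dist u y + 1 = G.dist u x := by
  have hd : G.dist u x ≠ 0 := by
    rw [Ne, hconn.dist_eq_zero_iff]
    exact fun h => hx h.symm
  obtain ⟨p, hp⟩ := hconn.exists_walk_length_eq_dist u x
  obtain ⟨y, hadj, q, hq⟩ := SimpleGraph.Walk.exists_eq_cons_of_ne hx p.reverse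
  have hql : q.length = G.dist u x - 1 := by
    have := congrArg SimpleGraph.Walk.length hq
    rw [SimpleGraph.Walk.length_reverse] at this
    simp only [SimpleGraph.Walk.length_cons] at this
    omega
  have h1 : G.dist y u ≤ G.dist u x - 1 := hql ▸ SimpleGraph.dist_le q
  have h2 : G.dist u x ≤ G.dist u y + 1 := by
    have htri : G.dist u x ≤ G.dist u y + G.dist y x := hconn.dist_triangle
    have : G.dist y x ≤ 1 := by
      simpa using SimpleGraph.dist_le (SimpleGraph.Walk.cons hadj.symm SimpleGraph.Walk.nil)
    omega
  refine ⟨y, hadj, ?_⟩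
  rw [SimpleGraph.dist_comm] at h1
  omega

lemma par_spec {G : SimpleGraph V} {u x : V} (hconn : G.Connected) (hx : x ≠ u) :
    G.Adj x (par G u x) ∧ G.dist u (par G u x) + 1 = G.dist u x := by
  have h := exists_par hconn hx
  rw [par]
  rw [dif_pos h]
  exact h.choose_spec

lemma par_u (G : SimpleGraph V) (u : V) : par G u u = u := by
  rw [par]
  rw [dif_neg]
  rintro ⟨z, -, hz⟩
  rw [SimpleGraph.dist_self] at hz
  omega

lemma dist_pos {G : SimpleGraph V} {u x : V} (hconn : G.Connected) (hx : x ≠ u) :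
    1 ≤ G.dist u x :=
  hconn.pos_dist_of_ne (fun h => hx h.symm)

lemma eq_u_of_dist_zero {G : SimpleGraph V} {u x : V} (hconn : G.Connected)
    (h : G.dist u x = 0) : x = u :=
  (hconn.dist_eq_zero_iff.mp h).symm

lemma dist_par_iterate {G : SimpleGraph V} {u : V} (hconn : G.Connected) :
    ∀ (t : ℕ) (x : V), t ≤ G.dist u x → G.dist u ((par G u)^[t] x) = G.dist u x - t := by
  intro t
  induction t with
  | zero => intro x _; simp
  | succ m ih =>
    intro x ht
    have hm : m ≤ G.dist u x := by omega
    have hz := ih x hm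
    set z := (par G u)^[m] x with hzdef
    have hzu : z ≠ u := by
      intro h
      rw [h, SimpleGraph.dist_self] at hz
      omega
    have hps := (par_spec hconn hzu).2
    rw [Function.iterate_succ_apply', ← hzdef]
    omega

lemma par_iterate_eq_u {G : SimpleGraph V} {u : V} (hconn : G.Connected) (x : V) :
    (par G u)^[G.dist u x] x = u := by
  have := dist_par_iterate hconn (G.dist u x) x le_rfl
  exact eq_u_of_dist_zero hconn (by omega)

/-- The child of `u` above `x` in the BFS tree. -/
noncomputable def branch (G : SimpleGraph V) (u x : V) : V :=
  (par G u)^[G.dist u x - 1] x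

lemma branch_child {G : SimpleGraph V} {u x y : V} (hconn : G.Connected) (hx : x ≠ u)
    (hpy : par G u y = x) :
    G.dist u y = G.dist u x + 1 ∧ branch G u y = branch G u x := by
  have hyu : y ≠ u := by
    intro h
    rw [h, par_u] at hpy
    exact hx hpy.symm
  have hps := (par_spec hconn hyu).2
  rw [hpy] at hps
  have hd : G.dist u y = G.dist u x + 1 := hps.symm
  refine ⟨hd, ?_⟩
  have hx1 : 1 ≤ G.dist u x := dist_pos hconn hx
  unfold branch
  rw [hd]
  have : G.dist u x + 1 - 1 = (G.dist u x - 1) + 1 := by omega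
  rw [this, Function.iterate_succ_apply, hpy]

lemma branch_eq_self {G : SimpleGraph V} {u a : V} (h : G.dist u a = 1) :
    branch G u a = a := by
  unfold branch
  rw [h]
  simp

open Classical in
/-- Ancestors of `x` (including `x` and `u`). -/
noncomputable def anc (G : SimpleGraph V) (u x : V) : Finset V :=
  (Finset.range (G.dist u x + 1)).image (fun t => (par G u)^[t] x)

lemma self_mem_anc (G : SimpleGraph V) (u x : V) : x ∈ anc G u x := by
  classical
  rw [anc]
  exact Finset.mem_image.mpr ⟨0, by simp, rfl⟩

lemma u_mem_anc {G : SimpleGraph V} (hconn : G.Connected) (u x : V) : u ∈ anc G u x := by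
  classical
  rw [anc]
  exact Finset.mem_image.mpr ⟨G.dist u x, by simp, par_iterate_eq_u hconn x⟩

lemma anc_card (G : SimpleGraph V) (u x : V) : (anc G u x).card ≤ G.dist u x + 1 := by
  classical
  rw [anc]
  exact le_trans (Finset.card_image_le) (by simp)

lemma par_mem_anc {G : SimpleGraph V} {u x y : V} (hconn : G.Connected)
    (hy : y ∈ anc G u x) (hyu : y ≠ u) : par G u y ∈ anc G u x := by
  classical
  rw [anc] at hy ⊢
  obtain ⟨t, ht, rfl⟩ := Finset.mem_image.mp hy
  rw [Finset.mem_range] at ht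
  have ht' : t < G.dist u x := by
    rcases Nat.lt_or_ge t (G.dist u x) with h | h
    · exact h
    · exfalso
      have : t = G.dist u x := by omega
      rw [this] at hyu
      exact hyu (par_iterate_eq_u hconn x)
  exact Finset.mem_image.mpr ⟨t + 1, Finset.mem_range.mpr (by omega),
    Function.iterate_succ_apply' (par G u) t x⟩

/-- A parent-closed finite set induces a connected subgraph. -/
lemma induced_connected {G : SimpleGraph V} {u : V} (hconn : G.Connected) (S : Finset V)
    (huS : u ∈ S) (hcl : ∀ y ∈ S, y ≠ u → par G u y ∈ S) :
    (G.induce (S : Set V)).Connected := by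
  have key : ∀ n (y : V) (hy : y ∈ S), G.dist u y = n →
      (G.induce (S : Set V)).Reachable ⟨y, hy⟩ ⟨u, huS⟩ := by
    intro n
    induction n using Nat.strong_induction_on with
    | _ n ih =>
      intro y hy hdy
      by_cases hyu : y = u
      · subst hyu
        rfl
      · have hpS : par G u y ∈ S := hcl y hy hyu
        have hps := par_spec hconn hyu
        have hadj : (G.induce (S : Set V)).Adj ⟨y, hy⟩ ⟨par G u y, hpS⟩ := hps.1
        exact hadj.reachable.trans
          (ih (G.dist u (par G u y)) (by omega) (par G u y) hpS rfl)
  rw [SimpleGraph.connected_iff]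
  refine ⟨?_, ⟨⟨u, huS⟩⟩⟩
  intro a b
  obtain ⟨ya, hya⟩ := a
  obtain ⟨yb, hyb⟩ := b
  exact (key _ ya hya rfl).trans (key _ yb hyb rfl).symm

/-- Non-parent edge. -/
def npe (G : SimpleGraph V) (u x y : V) : Prop :=
  G.Adj x y ∧ par G u x ≠ y ∧ par G u y ≠ x

lemma dist_le_one_of_adj {G : SimpleGraph V} {x y : V} (h : G.Adj x y) : G.dist x y ≤ 1 := by
  simpa using SimpleGraph.dist_le (SimpleGraph.Walk.cons h SimpleGraph.Walk.nil)

/-- Two distinct non-parent edges within the `4k`-ball give a small dense connected subgraph. -/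
lemma two_npe [Fintype V] {G : SimpleGraph V} {u : V} (hconn : G.Connected) {k : ℕ}
    (hk : 1 ≤ k) {b₁ c₁ b₂ c₂ : V}
    (h₁ : npe G u b₁ c₁) (h₂ : npe G u b₂ c₂) (hne : s(b₁, c₁) ≠ s(b₂, c₂))
    (hd1 : G.dist u b₁ ≤ 4 * k) (hd2 : G.dist u c₁ ≤ 4 * k)
    (hd3 : G.dist u b₂ ≤ 4 * k) (hd4 : G.dist u c₂ ≤ 4 * k) :
    ∃ S : Finset V, S.card ≤ 20 * k ∧ (G.induce (S : Set V)).Connected ∧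
      2 * S.card + 2 ≤ Nat.card {e : V × V // e.1 ∈ S ∧ e.2 ∈ S ∧ G.Adj e.1 e.2} := by
  classical
  set S : Finset V := ((anc G u b₁ ∪ anc G u c₁) ∪ (anc G u b₂ ∪ anc G u c₂)) with hS
  have hmem : ∀ x, x ∈ S ↔ x ∈ anc G u b₁ ∨ x ∈ anc G u c₁ ∨ x ∈ anc G u b₂ ∨ x ∈ anc G u c₂ := by
    intro x
    simp [hS, Finset.mem_union, or_assoc]
  have huS : u ∈ S := (hmem u).mpr (Or.inl (u_mem_anc hconn u b₁))
  have hcl : ∀ y ∈ S, y ≠ u → par G u y ∈ S := by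
    intro y hy hyu
    rcases (hmem y).mp hy with h | h | h | h
    · exact (hmem _).mpr (Or.inl (par_mem_anc hconn h hyu))
    · exact (hmem _).mpr (Or.inr (Or.inl (par_mem_anc hconn h hyu)))
    · exact (hmem _).mpr (Or.inr (Or.inr (Or.inl (par_mem_anc hconn h hyu))))
    · exact (hmem _).mpr (Or.inr (Or.inr (Or.inr (par_mem_anc hconn h hyu))))
  have hcard : S.card ≤ 20 * k := by
    have e1 := anc_card G u b₁
    have e2 := anc_card G u c₁
    have e3 := anc_card G u b₂
    have e4 := anc_card G u c₂
    have t1 : S.card ≤ (anc G u b₁).card + (anc G u c₁).card +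
        ((anc G u b₂).card + (anc G u c₂).card) := by
      calc S.card ≤ (anc G u b₁ ∪ anc G u c₁).card + (anc G u b₂ ∪ anc G u c₂).card :=
            Finset.card_union_le _ _
        _ ≤ _ := by
            have := Finset.card_union_le (anc G u b₁) (anc G u c₁)
            have := Finset.card_union_le (anc G u b₂) (anc G u c₂)
            omega
    omega
  refine ⟨S, hcard, induced_connected hconn S huS hcl, ?_⟩
  -- the edge count
  set A : Finset (V × V) := (S.erase u).image (fun x => (x, par G u x)) with hA
  set B : Finset (V × V) := (S.erase u).image (fun x => (par G u x, x)) with hB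
  set C : Finset (V × V) := {(b₁, c₁), (c₁, b₁), (b₂, c₂), (c₂, b₂)} with hC
  have hb1c1 : b₁ ≠ c₁ := G.ne_of_adj h₁.1
  have hb2c2 : b₂ ≠ c₂ := G.ne_of_adj h₂.1
  have hsymne : ∀ x y z w : V, s(x, y) ≠ s(z, w) → (x, y) ≠ (z, w) ∧ (x, y) ≠ (w, z) := by
    intro x y z w h
    constructor
    · rintro ⟨⟩
      exact h rfl
    · intro hh
      apply h
      rw [Prod.ext_iff] at hh
      obtain ⟨rfl, rfl⟩ := hh
      exact Sym2.eq_swap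
  have hCcard : C.card = 4 := by
    have n1 := hsymne _ _ _ _ hne
    have n2 := hsymne b₁ c₁ c₂ b₂ (by rw [@Sym2.eq_swap _ c₂ b₂]; exact hne)
    have n3 := hsymne c₁ b₁ b₂ c₂ (by rw [@Sym2.eq_swap _ c₁ b₁]; exact hne)
    have n4 := hsymne c₁ b₁ c₂ b₂ (by rw [@Sym2.eq_swap _ c₁ b₁, @Sym2.eq_swap _ c₂ b₂]; exact hne)
    have d1 : (b₁, c₁) ≠ (c₁, b₁) := by
      intro h; simp only [Prod.mk.injEq] at h; exact hb1c1 h.1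
    have d2 : (b₂, c₂) ≠ (c₂, b₂) := by
      intro h; simp only [Prod.mk.injEq] at h; exact hb2c2 h.1
    rw [hC]
    rw [Finset.card_insert_of_notMem, Finset.card_insert_of_notMem,
      Finset.card_insert_of_notMem, Finset.card_singleton]
    · simp only [Finset.mem_singleton]
      exact d2
    · simp only [Finset.mem_insert, Finset.mem_singleton]
      push_neg
      exact ⟨n3.1, n3.2⟩
    · simp only [Finset.mem_insert, Finset.mem_singleton]
      push_neg
      exact ⟨d1, n1.1, n1.2⟩
  have hparne : ∀ x : V, x ∈ S.erase u → x ≠ u ∧ G.Adj x (par G u x) ∧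
      G.dist u (par G u x) + 1 = G.dist u x := by
    intro x hx
    have hxu : x ≠ u := (Finset.mem_erase.mp hx).1
    exact ⟨hxu, (par_spec hconn hxu).1, (par_spec hconn hxu).2⟩
  have hAcard : A.card = S.card - 1 := by
    rw [hA, Finset.card_image_of_injective _ (fun x y h => (Prod.ext_iff.mp h).1),
      Finset.card_erase_of_mem huS]
  have hBcard : B.card = S.card - 1 := by
    rw [hB, Finset.card_image_of_injective _ (fun x y h => (Prod.ext_iff.mp h).2),
      Finset.card_erase_of_mem huS]
  have hAB : Disjoint A B := by
    rw [Finset.disjoint_left]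
    rintro ⟨p, q⟩ hpA hpB
    rw [hA, Finset.mem_image] at hpA
    rw [hB, Finset.mem_image] at hpB
    obtain ⟨x, hx, hxe⟩ := hpA
    obtain ⟨y, hy, hye⟩ := hpB
    obtain ⟨hxu, -, hxd⟩ := hparne x hx
    obtain ⟨hyu, -, hyd⟩ := hparne y hy
    simp only [Prod.mk.injEq] at hxe hye
    obtain ⟨hx1, hx2⟩ := hxe
    obtain ⟨hy1, hy2⟩ := hye
    -- x = p = par y, par x = q = y
    have e1 : par G u y = x := by rw [hy1, hx1]
    have e2 : par G u x = y := by rw [hx2, ← hy2]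
    rw [e2] at hxd
    rw [e1] at hyd
    have hx1' : 1 ≤ G.dist u x := dist_pos hconn hxu
    omega
  have hABC : Disjoint (A ∪ B) C := by
    rw [Finset.disjoint_left]
    rintro ⟨p, q⟩ hpAB hpC
    have hnpe : par G u p ≠ q ∧ par G u q ≠ p := by
      rw [hC] at hpC
      simp only [Finset.mem_insert, Finset.mem_singleton] at hpC
      rcases hpC with h | h | h | h <;> (simp only [Prod.mk.injEq] at h; obtain ⟨rfl, rfl⟩ := h)
      · exact ⟨h₁.2.1, h₁.2.2⟩
      · exact ⟨h₁.2.2, h₁.2.1⟩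
      · exact ⟨h₂.2.1, h₂.2.2⟩
      · exact ⟨h₂.2.2, h₂.2.1⟩
    rw [Finset.mem_union] at hpAB
    rcases hpAB with h | h
    · rw [hA, Finset.mem_image] at h
      obtain ⟨x, hx, hxe⟩ := h
      simp only [Prod.mk.injEq] at hxe
      obtain ⟨h1, h2⟩ := hxe
      subst h1
      exact hnpe.1 h2
    · rw [hB, Finset.mem_image] at h
      obtain ⟨x, hx, hxe⟩ := h
      simp only [Prod.mk.injEq] at hxe
      obtain ⟨h1, h2⟩ := hxe
      subst h2
      exact hnpe.2 h1
  set P : Finset (V × V) := (A ∪ B) ∪ C with hP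
  have hPcard : P.card = 2 * S.card + 2 := by
    rw [hP, Finset.card_union_of_disjoint hABC, Finset.card_union_of_disjoint hAB,
      hAcard, hBcard, hCcard]
    have : 1 ≤ S.card := Finset.card_pos.mpr ⟨u, huS⟩
    omega
  have hPsub : ∀ e ∈ P, e.1 ∈ S ∧ e.2 ∈ S ∧ G.Adj e.1 e.2 := by
    rintro ⟨p, q⟩ hpq
    rw [hP, Finset.mem_union, Finset.mem_union] at hpq
    have hS4 : b₁ ∈ S ∧ c₁ ∈ S ∧ b₂ ∈ S ∧ c₂ ∈ S := by
      refine ⟨(hmem _).mpr (Or.inl (self_mem_anc G u b₁)),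
        (hmem _).mpr (Or.inr (Or.inl (self_mem_anc G u c₁))),
        (hmem _).mpr (Or.inr (Or.inr (Or.inl (self_mem_anc G u b₂)))),
        (hmem _).mpr (Or.inr (Or.inr (Or.inr (self_mem_anc G u c₂))))⟩
    rcases hpq with (h | h) | h
    · rw [hA, Finset.mem_image] at h
      obtain ⟨x, hx, hxe⟩ := h
      obtain ⟨hxu, hadj, -⟩ := hparne x hx
      have hxS : x ∈ S := (Finset.mem_erase.mp hx).2
      simp only [Prod.mk.injEq] at hxe
      obtain ⟨h1, h2⟩ := hxe
      subst h1; subst h2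
      exact ⟨hxS, hcl _ hxS hxu, hadj⟩
    · rw [hB, Finset.mem_image] at h
      obtain ⟨x, hx, hxe⟩ := h
      obtain ⟨hxu, hadj, -⟩ := hparne x hx
      have hxS : x ∈ S := (Finset.mem_erase.mp hx).2
      simp only [Prod.mk.injEq] at hxe
      obtain ⟨h1, h2⟩ := hxe
      subst h1; subst h2
      exact ⟨hcl _ hxS hxu, hxS, hadj.symm⟩
    · rw [hC] at h
      simp only [Finset.mem_insert, Finset.mem_singleton] at h
      rcases h with h | h | h | h <;> (simp only [Prod.mk.injEq] at h; obtain ⟨rfl, rfl⟩ := h)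
      · exact ⟨hS4.1, hS4.2.1, h₁.1⟩
      · exact ⟨hS4.2.1, hS4.1, h₁.1.symm⟩
      · exact ⟨hS4.2.2.1, hS4.2.2.2, h₂.1⟩
      · exact ⟨hS4.2.2.2, hS4.2.2.1, h₂.1.symm⟩
  have hcount : Nat.card {e : V × V // e.1 ∈ S ∧ e.2 ∈ S ∧ G.Adj e.1 e.2} =
      (Finset.univ.filter (fun e : V × V => e.1 ∈ S ∧ e.2 ∈ S ∧ G.Adj e.1 e.2)).card := by
    rw [Nat.card_eq_fintype_card, Fintype.card_subtype]
  rw [hcount, ← hPcard]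
  apply Finset.card_le_card
  intro e he
  rw [Finset.mem_filter]
  exact ⟨Finset.mem_univ e, hPsub e he⟩

/-- Splitting a walk at the first non-parent edge from the `w` side. -/
lemma walk_npe {G : SimpleGraph V} {u : V} (hconn : G.Connected) :
    ∀ {w v' : V} (R : G.Walk w v'), (∀ x ∈ R.support, x ≠ u) →
      branch G u w = branch G u v' ∨
      ∃ β γ, npe G u β γ ∧ branch G u β = branch G u w ∧ β ∈ R.support ∧ γ ∈ R.support := by
  intro w v' R
  induction R with
  | nil => intro _; exact Or.inl rfl
  | @cons w z v' h R' ih =>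
    intro hsup
    have hw : w ≠ u := hsup w (SimpleGraph.Walk.start_mem_support _)
    have hz : z ≠ u := by
      apply hsup
      rw [SimpleGraph.Walk.support_cons]
      exact List.mem_cons_of_mem _ (SimpleGraph.Walk.start_mem_support _)
    have hsup' : ∀ x ∈ R'.support, x ≠ u := by
      intro x hx
      apply hsup
      rw [SimpleGraph.Walk.support_cons]
      exact List.mem_cons_of_mem _ hx
    by_cases hc : par G u z = w
    · have hbz := (branch_child hconn hw hc).2
      rcases ih hsup' with he | ⟨β, γ, h1, h2, h3, h4⟩
      · left; rw [← he, hbz]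
      · right
        refine ⟨β, γ, h1, by rw [h2, hbz], ?_, ?_⟩ <;>
          (rw [SimpleGraph.Walk.support_cons]; exact List.mem_cons_of_mem _ (by assumption))
    · by_cases hc' : par G u w = z
      · have hbz := (branch_child hconn hz hc').2
        rcases ih hsup' with he | ⟨β, γ, h1, h2, h3, h4⟩
        · left; rw [← he, hbz]
        · right
          refine ⟨β, γ, h1, by rw [h2, hbz], ?_, ?_⟩ <;>
            (rw [SimpleGraph.Walk.support_cons]; exact List.mem_cons_of_mem _ (by assumption))
      · right
        refine ⟨w, z, ⟨h, hc', hc⟩, rfl, SimpleGraph.Walk.start_mem_support _, ?_⟩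
        rw [SimpleGraph.Walk.support_cons]
        exact List.mem_cons_of_mem _ (SimpleGraph.Walk.start_mem_support _)

/-- Descent in the 2-core away from `u`, in a fixed branch `c`. -/
lemma desc_u [Fintype V] {G : SimpleGraph V} {u : V} (hconn : G.Connected)
    (hTwo : ∀ x, x ∈ kCore G 2 → ∃ y z : V, y ≠ z ∧ (y ∈ kCore G 2 ∧ G.Adj x y) ∧
      (z ∈ kCore G 2 ∧ G.Adj x z)) (i : ℕ) (c : V) :
    ∀ (n t : ℕ) (x : V), i - t = n → 1 ≤ t → t ≤ i → x ∈ kCore G 2 → G.dist u x = t →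
      branch G u x = c →
      (∃ β γ, npe G u β γ ∧ branch G u β = c ∧ G.dist u β ≤ i ∧ G.dist u γ ≤ i + 1) ∨
      (∃ w, G.dist u w = i ∧ branch G u w = c) := by
  intro n
  induction n with
  | zero =>
    intro t x hn h1 hti hxc hdx hbx
    exact Or.inr ⟨x, by omega, hbx⟩
  | succ m ih =>
    intro t x hn h1 hti hxc hdx hbx
    have hxu : x ≠ u := by
      intro h
      rw [h, SimpleGraph.dist_self] at hdx
      omega
    obtain ⟨y, z, hyz, ⟨hyc, hxy⟩, ⟨hzc, hxz⟩⟩ := hTwo x hxc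
    obtain ⟨y', ⟨hy'c, hxy'⟩, hy'p⟩ : ∃ y', (y' ∈ kCore G 2 ∧ G.Adj x y') ∧ par G u x ≠ y' := by
      by_cases hyp : par G u x = y
      · refine ⟨z, ⟨hzc, hxz⟩, ?_⟩
        rw [hyp]
        exact hyz
      · exact ⟨y, ⟨hyc, hxy⟩, hyp⟩
    by_cases hch : par G u y' = x
    · -- child step
      obtain ⟨hdy', hby'⟩ := branch_child hconn hxu hch
      exact ih (t + 1) y' (by omega) (by omega) (by omega) hy'c (by omega)
        (by rw [hby', hbx])
    · -- non-parent edge found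
      left
      refine ⟨x, y', ⟨hxy', hy'p, hch⟩, hbx, by omega, ?_⟩
      have : G.dist u y' ≤ G.dist u x + G.dist x y' := hconn.dist_triangle
      have := dist_le_one_of_adj hxy'
      omega

/-- Descent in the 2-core away from `v` (tracked in the `u`-BFS tree). -/
lemma desc_v [Fintype V] {G : SimpleGraph V} {u v : V} (hconn : G.Connected)
    (hTwo : ∀ x, x ∈ kCore G 2 → ∃ y z : V, y ≠ z ∧ (y ∈ kCore G 2 ∧ G.Adj x y) ∧
      (z ∈ kCore G 2 ∧ G.Adj x z)) (i : ℕ) (hvu : v ≠ u)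
    (hNsym : ∀ w, G.dist v w = i → G.dist u w ≤ i) :
    ∀ (n s : ℕ) (x : V), i - s = n → 1 ≤ s → s ≤ i → x ∈ kCore G 2 →
      G.dist u x = G.dist u v + s → G.dist v x ≤ s → branch G u x = branch G u v →
      ∃ β γ, npe G u β γ ∧ branch G u β = branch G u v ∧
        G.dist u β ≤ G.dist u v + i ∧ G.dist u γ ≤ G.dist u v + i + 1 := by
  intro n
  induction n with
  | zero =>
    intro s x hn h1 hsi hxc hdx hvx hbx
    exfalso
    have hsEq : s = i := by omega
    have hge : G.dist v x ≥ s := by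
      have : G.dist u x ≤ G.dist u v + G.dist v x := hconn.dist_triangle
      omega
    have hvxi : G.dist v x = i := by omega
    have := hNsym x hvxi
    have hd1 : 1 ≤ G.dist u v := dist_pos hconn hvu
    omega
  | succ m ih =>
    intro s x hn h1 hsi hxc hdx hvx hbx
    have hd1 : 1 ≤ G.dist u v := dist_pos hconn hvu
    have hxu : x ≠ u := by
      intro h
      rw [h, SimpleGraph.dist_self] at hdx
      omega
    obtain ⟨y, z, hyz, ⟨hyc, hxy⟩, ⟨hzc, hxz⟩⟩ := hTwo x hxc
    obtain ⟨y', ⟨hy'c, hxy'⟩, hy'p⟩ : ∃ y', (y' ∈ kCore G 2 ∧ G.Adj x y') ∧ par G u x ≠ y' := by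
      by_cases hyp : par G u x = y
      · refine ⟨z, ⟨hzc, hxz⟩, ?_⟩
        rw [hyp]
        exact hyz
      · exact ⟨y, ⟨hyc, hxy⟩, hyp⟩
    by_cases hch : par G u y' = x
    · obtain ⟨hdy', hby'⟩ := branch_child hconn hxu hch
      have hvy' : G.dist v y' ≤ s + 1 := by
        have : G.dist v y' ≤ G.dist v x + G.dist x y' := hconn.dist_triangle
        have := dist_le_one_of_adj hxy'
        omega
      exact ih (s + 1) y' (by omega) (by omega) (by omega) hy'c (by omega) hvy'
        (by rw [hby', hbx])
    · refine ⟨x, y', ⟨hxy', hy'p, hch⟩, hbx, by omega, ?_⟩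
      have : G.dist u y' ≤ G.dist u x + G.dist x y' := hconn.dist_triangle
      have := dist_le_one_of_adj hxy'
      omega

/-- A middle vertex along any walk. -/
lemma exists_mid {G : SimpleGraph V} (hconn : G.Connected) :
    ∀ {x y : V} (W : G.Walk x y) (j : ℕ), j ≤ W.length →
      ∃ m, G.dist x m ≤ j ∧ G.dist m y ≤ W.length - j := by
  intro x y W
  induction W with
  | nil =>
    intro j _
    exact ⟨_, le_trans (le_of_eq SimpleGraph.dist_self) (Nat.zero_le _),
      le_trans (le_of_eq SimpleGraph.dist_self) (Nat.zero_le _)⟩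
  | @cons a b y h W' ih =>
    intro j hj
    match j with
    | 0 =>
      refine ⟨a, by simp [SimpleGraph.dist_self], ?_⟩
      simpa using SimpleGraph.dist_le (SimpleGraph.Walk.cons h W')
    | (j' + 1) =>
      obtain ⟨m, hm1, hm2⟩ := ih j' (by simpa using hj)
      refine ⟨m, ?_, ?_⟩
      · have : G.dist a m ≤ G.dist a b + G.dist b m := hconn.dist_triangle
        have := dist_le_one_of_adj h
        omega
      · rw [SimpleGraph.Walk.length_cons]
        omega

/-- Every 2-core vertex has two distinct neighbours in the 2-core. -/
lemma core_two [Fintype V] {G : SimpleGraph V} :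
    ∀ x, x ∈ kCore G 2 → ∃ y z : V, y ≠ z ∧ (y ∈ kCore G 2 ∧ G.Adj x y) ∧
      (z ∈ kCore G 2 ∧ G.Adj x z) := by
  classical
  intro x hx
  obtain ⟨S₀, hS₀, hxS₀⟩ := hx
  have hS₀sub : S₀ ⊆ kCore G 2 := Set.subset_sUnion_of_mem hS₀
  have h2 : 2 ≤ Nat.card {y : V // y ∈ S₀ ∧ G.Adj x y} := hS₀ x hxS₀
  have hsub : {y : V | y ∈ S₀ ∧ G.Adj x y} ⊆ {y : V | y ∈ kCore G 2 ∧ G.Adj x y} := by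
    intro y hy
    exact ⟨hS₀sub hy.1, hy.2⟩
  have hcard : 2 ≤ ({y : V | y ∈ kCore G 2 ∧ G.Adj x y}).ncard := by
    have e1 : Nat.card {y : V // y ∈ S₀ ∧ G.Adj x y} = {y : V | y ∈ S₀ ∧ G.Adj x y}.ncard :=
      Nat.card_coe_set_eq _
    have h3 : ({y : V | y ∈ S₀ ∧ G.Adj x y}).ncard ≤
        ({y : V | y ∈ kCore G 2 ∧ G.Adj x y}).ncard :=
      Set.ncard_le_ncard hsub (Set.toFinite _)
    rw [e1] at h2
    exact le_trans h2 h3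
  obtain ⟨y, hy⟩ : ({y : V | y ∈ kCore G 2 ∧ G.Adj x y}).Nonempty := by
    rw [← Set.ncard_pos (Set.toFinite _)]
    omega
  obtain ⟨z, hz, hzy⟩ := Set.exists_ne_of_one_lt_ncard (s := {y : V | y ∈ kCore G 2 ∧ G.Adj x y}) (by omega) y
  exact ⟨z, y, hzy, hz, hy⟩

/-- `Nat.card` of the neighbour subtype as an `ncard`. -/
lemma natcard_nbrs [Fintype V] {G : SimpleGraph V} {x : V} :
    Nat.card {y : V // y ∈ kCore G 2 ∧ G.Adj x y} =
      ({y : V | y ∈ kCore G 2 ∧ G.Adj x y}).ncard :=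
  Nat.card_coe_set_eq _

lemma dist_le_of_mem_support [DecidableEq V] {G : SimpleGraph V} {v w x : V} (π : G.Walk v w)
    (hx : x ∈ π.support) : G.dist v x ≤ π.length :=
  le_trans (SimpleGraph.dist_le (π.takeUntil x hx)) (SimpleGraph.Walk.length_takeUntil_le π hx)

end S19

/-- Lemma 6.5.
Let `k ≥ 1` and let `G` be a connected finite graph with no connected subgraph on at most
`20k` vertices having more edges than vertices (i.e. containing at least two cycles; edge
counts taken over ordered adjacent pairs). Then for distinct `u, v ∈ V_{2,3}(G)` and every
`1 ≤ i ≤ k` there is a vertex `w` with `dist(u,w) = i < dist(v,w)` or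
`dist(v,w) = i < dist(u,w)`. -/
theorem stmt19 {V : Type*} [Fintype V] (k : ℕ) (hk : 1 ≤ k) (G : SimpleGraph V)
    (hconn : G.Connected)
    (hnos : ¬ ∃ S : Finset V, S.card ≤ 20 * k ∧ (G.induce (S : Set V)).Connected ∧
      2 * S.card + 2 ≤ Nat.card {e : V × V // e.1 ∈ S ∧ e.2 ∈ S ∧ G.Adj e.1 e.2})
    (u v : V) (hu : u ∈ V23 G) (hv : v ∈ V23 G) (huv : u ≠ v)
    (i : ℕ) (hi1 : 1 ≤ i) (hik : i ≤ k) :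
    ∃ w : V, (G.dist u w = i ∧ i < G.dist v w) ∨ (G.dist v w = i ∧ i < G.dist u w) := by
  classical
  by_contra hN
  push_neg at hN
  have hN1 : ∀ w, G.dist u w = i → G.dist v w ≤ i := fun w hw => (hN w).1 hw
  have hN2 : ∀ w, G.dist v w = i → G.dist u w ≤ i := fun w hw => (hN w).2 hw
  obtain ⟨huC, hu3⟩ := hu
  obtain ⟨hvC, hv3⟩ := hv
  have hTwo := S19.core_two (G := G)
  have hvu : v ≠ u := huv.symm
  have hd1 : 1 ≤ G.dist u v := S19.dist_pos hconn hvu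
  -- `d ≤ 2i`
  have hd2i : G.dist u v ≤ 2 * i := by
    by_cases hdi : G.dist u v ≤ i
    · omega
    · obtain ⟨W, hW⟩ := hconn.exists_walk_length_eq_dist u v
      obtain ⟨m, hm1, hm2⟩ := S19.exists_mid hconn W i (by omega)
      rw [hW] at hm2
      have htri : G.dist u v ≤ G.dist u m + G.dist m v := hconn.dist_triangle
      have hmu : G.dist u m = i := by omega
      have hvm := hN1 m hmu
      rw [SimpleGraph.dist_comm] at hvm
      omega
  set cv := S19.branch G u v with hcv
  -- two branch children of `u` avoiding `cv`
  have hu3' : 3 ≤ ({y : V | y ∈ kCore G 2 ∧ G.Adj u y}).ncard := by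
    rw [← S19.natcard_nbrs]
    exact hu3
  obtain ⟨a₁, ha₁, ha₁cv⟩ := Set.exists_ne_of_one_lt_ncard
    (s := {y : V | y ∈ kCore G 2 ∧ G.Adj u y}) (by omega) cv
  have hrest : 2 ≤ (({y : V | y ∈ kCore G 2 ∧ G.Adj u y}) \ {a₁}).ncard := by
    rw [Set.ncard_diff_singleton_of_mem ha₁]
    omega
  obtain ⟨a₂, ha₂', ha₂cv⟩ := Set.exists_ne_of_one_lt_ncard
    (s := ({y : V | y ∈ kCore G 2 ∧ G.Adj u y}) \ {a₁}) (by omega) cv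
  have ha₂ : a₂ ∈ {y : V | y ∈ kCore G 2 ∧ G.Adj u y} := ha₂'.1
  have ha21 : a₂ ≠ a₁ := ha₂'.2
  -- the `v`-side children candidates
  have hv3' : 3 ≤ ({y : V | y ∈ kCore G 2 ∧ G.Adj v y}).ncard := by
    rw [← S19.natcard_nbrs]
    exact hv3
  obtain ⟨y₁, hy₁, hy₁p⟩ := Set.exists_ne_of_one_lt_ncard
    (s := {y : V | y ∈ kCore G 2 ∧ G.Adj v y}) (by omega) (S19.par G u v)
  have hrest2 : 2 ≤ (({y : V | y ∈ kCore G 2 ∧ G.Adj v y}) \ {y₁}).ncard := by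
    rw [Set.ncard_diff_singleton_of_mem hy₁]
    omega
  obtain ⟨y₂, hy₂', hy₂p⟩ := Set.exists_ne_of_one_lt_ncard
    (s := ({y : V | y ∈ kCore G 2 ∧ G.Adj v y}) \ {y₁}) (by omega) (S19.par G u v)
  have hy₂ : y₂ ∈ {y : V | y ∈ kCore G 2 ∧ G.Adj v y} := hy₂'.1
  have hy21 : y₂ ≠ y₁ := hy₂'.2
  -- main case split: two distinct non-parent edges in the ball
  by_cases hW : ∃ b₁ c₁ b₂ c₂ : V, (S19.npe G u b₁ c₁ ∧ S19.npe G u b₂ c₂ ∧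
      G.dist u b₁ ≤ 4 * k ∧ G.dist u c₁ ≤ 4 * k ∧ G.dist u b₂ ≤ 4 * k ∧
      G.dist u c₂ ≤ 4 * k) ∧ s(b₁, c₁) ≠ s(b₂, c₂)
  · obtain ⟨b₁, c₁, b₂, c₂, ⟨hh1, hh2, e1, e2, e3, e4⟩, hne⟩ := hW
    exact hnos (S19.two_npe hconn hk hh1 hh2 hne e1 e2 e3 e4)
  push_neg at hW
  -- hW : all non-parent edges in the ball coincide as unordered pairs
  -- Demand from a branch child `a` of `u`
  have demand : ∀ a : V, a ∈ kCore G 2 → G.Adj u a → a ≠ cv →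
      ∃ β γ, S19.npe G u β γ ∧ S19.branch G u β = a ∧
        G.dist u β ≤ 4 * k ∧ G.dist u γ ≤ 4 * k := by
    intro a haC hadj hacv
    have hda : G.dist u a = 1 := by
      have h1 := S19.dist_le_one_of_adj hadj
      have h2 : 1 ≤ G.dist u a := S19.dist_pos hconn (G.ne_of_adj hadj).symm
      omega
    have hba : S19.branch G u a = a := S19.branch_eq_self hda
    rcases S19.desc_u hconn hTwo i a (i - 1) 1 a (by omega) le_rfl hi1 haC hda hba with
      ⟨β, γ, h1, h2, h3, h4⟩ | ⟨w, hw1, hw2⟩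
    · exact ⟨β, γ, h1, h2, by omega, by omega⟩
    · -- a full descent to distance `i`: use the short return path to `v`
      have hgw : G.dist v w ≤ i := hN1 w hw1
      obtain ⟨π, hπ⟩ := hconn.exists_walk_length_eq_dist v w
      have husup : ∀ x ∈ π.support, x ≠ u := by
        intro x hxs hxu
        subst hxu
        have hsplit := congrArg SimpleGraph.Walk.length (π.take_spec hxs)
        rw [SimpleGraph.Walk.length_append] at hsplit
        have l1 : G.dist v x ≤ (π.takeUntil x hxs).length := SimpleGraph.dist_le _
        have l2 : G.dist x w ≤ (π.dropUntil x hxs).length := SimpleGraph.dist_le _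
        rw [SimpleGraph.dist_comm] at l1
        rw [hw1] at l2  -- careful: l2 is dist x w with x = u: hw1 : G.dist u w = i
        omega
      have hsupR : ∀ x ∈ π.reverse.support, x ≠ u := by
        intro x hx
        apply husup
        rw [SimpleGraph.Walk.support_reverse] at hx
        exact List.mem_reverse.mp hx
      rcases S19.walk_npe hconn π.reverse hsupR with he | ⟨β, γ, h1, h2, h3, h4⟩
      · exfalso
        rw [hw2] at he
        exact hacv he
      · have hsupb : ∀ x ∈ π.reverse.support, G.dist u x ≤ 4 * k := by
          intro x hx
          rw [SimpleGraph.Walk.support_reverse] at hx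
          have := S19.dist_le_of_mem_support π (List.mem_reverse.mp hx)
          have htri : G.dist u x ≤ G.dist u v + G.dist v x := hconn.dist_triangle
          omega
        exact ⟨β, γ, h1, by rw [h2, hw2], hsupb β h3, hsupb γ h4⟩
  -- Demand from the `v` side
  have hvdemand : ∃ β γ, S19.npe G u β γ ∧ S19.branch G u β = cv ∧
      G.dist u β ≤ 4 * k ∧ G.dist u γ ≤ 4 * k := by
    have hstart : ∀ y : V, y ∈ kCore G 2 → G.Adj v y → S19.par G u y = v →
        ∃ β γ, S19.npe G u β γ ∧ S19.branch G u β = cv ∧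
          G.dist u β ≤ 4 * k ∧ G.dist u γ ≤ 4 * k := by
      intro y hyC hadj hpy
      obtain ⟨hdy, hby⟩ := S19.branch_child hconn hvu hpy
      have hdvy : G.dist v y ≤ 1 := S19.dist_le_one_of_adj hadj
      obtain ⟨β, γ, h1, h2, h3, h4⟩ := S19.desc_v hconn hTwo i hvu hN2 (i - 1) 1 y
        (by omega) le_rfl hi1 hyC (by omega) hdvy (by rw [hby])
      exact ⟨β, γ, h1, h2, by omega, by omega⟩
    by_cases hc1 : S19.par G u y₁ = v
    · exact hstart y₁ hy₁.1 hy₁.2 hc1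
    · by_cases hc2 : S19.par G u y₂ = v
      · exact hstart y₂ hy₂.1 hy₂.2 hc2
      · -- two distinct non-parent edges at `v`: contradiction with `hW`
        exfalso
        have hvy₁ : y₁ ≠ v := fun h => G.irrefl (h ▸ hy₁.2)
        have hn1 : S19.npe G u v y₁ := ⟨hy₁.2, fun h => hy₁p h.symm, hc1⟩
        have hn2 : S19.npe G u v y₂ := ⟨hy₂.2, fun h => hy₂p h.symm, hc2⟩
        have hb1 : G.dist u v ≤ 4 * k := by omega
        have hb2 : G.dist u y₁ ≤ 4 * k := by
          have := hconn.dist_triangle (u := u) (v := v) (w := y₁)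
          have := S19.dist_le_one_of_adj hy₁.2
          omega
        have hb3 : G.dist u y₂ ≤ 4 * k := by
          have := hconn.dist_triangle (u := u) (v := v) (w := y₂)
          have := S19.dist_le_one_of_adj hy₂.2
          omega
        have := hW v y₁ v y₂ ⟨hn1, hn2, hb1, hb2, hb1, hb3⟩
        rw [Sym2.eq_iff] at this
        rcases this with ⟨-, h⟩ | ⟨h1', h2'⟩
        · exact hy21 h.symm
        · exact hvy₁ h2'
  -- Pigeonhole among the three demands
  obtain ⟨β₁, γ₁, hn1, hb1, hd11, hd12⟩ := demand a₁ ha₁.1 ha₁.2 ha₁cv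
  obtain ⟨β₂, γ₂, hn2, hb2, hd21, hd22⟩ := demand a₂ ha₂.1 ha₂.2 ha₂cv
  obtain ⟨β₃, γ₃, hn3, hb3, hd31, hd32⟩ := hvdemand
  have q12 := hW β₁ γ₁ β₂ γ₂ ⟨hn1, hn2, hd11, hd12, hd21, hd22⟩
  have q13 := hW β₁ γ₁ β₃ γ₃ ⟨hn1, hn3, hd11, hd12, hd31, hd32⟩
  have hβ12 : β₁ ≠ β₂ := by
    intro h
    apply ha21
    rw [← hb1, ← hb2, h]
  have hβ13 : β₁ ≠ β₃ := by
    intro h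
    apply ha₁cv
    rw [← hb1, ← hb3, h]
  have hβ23 : β₂ ≠ β₃ := by
    intro h
    apply ha₂cv
    rw [← hb2, ← hb3, h]
  rw [Sym2.eq_iff] at q12 q13
  rcases q12 with ⟨h, -⟩ | ⟨-, hg2⟩
  · exact hβ12 h
  rcases q13 with ⟨h, -⟩ | ⟨-, hg3⟩
  · exact hβ13 h
  exact hβ23 (hg2.symm.trans hg3)
end
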